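/- arXiv:2006.13540 — 6 statements merged into one kernel-verified Lean document; each statement's English description precedes it below -/
import Mathlib

section
/- Let n ≥ 2, let ζ ∈ ℂ be a primitive n-th root of unity, s = diag(1, ζ, …, ζ^{n−1}) ∈ GL(n,ℂ), and W ∈ GL(n,ℂ) the cyclic permutation matrix with W·eᵢ = e_{i+1 (mod n)}. Let T̄ ⊆ PGL(n,ℂ) denote the image of the group of invertible diagonal matrices, and let s̄, W̄ denote the images of s, W in PGL(n,ℂ). Then the set of fixed points {t ∈ T̄ : W̄ t W̄⁻¹ = t} is exactly the cyclic subgroup generated by s̄, which has order n. -/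
open Matrix

/-- The center of `GL(n, ℂ)` consists exactly of the scalar matrices. -/
lemma aux_center_iff {n : ℕ} (g : Matrix.GeneralLinearGroup (Fin n) ℂ) :
    g ∈ Subgroup.center (Matrix.GeneralLinearGroup (Fin n) ℂ) ↔
      ∃ c : ℂ, (g : Matrix (Fin n) (Fin n) ℂ) = c • 1 := by
  constructor
  · intro hg
    have hcomm := Subgroup.mem_center_iff.mp hg
    have hpair : Pairwise fun i j : Fin n =>
        Commute (single i j 1) (g : Matrix (Fin n) (Fin n) ℂ) := by
      intro i j hij
      set E := single i j (1 : ℂ) with hE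
      have hE2 : E * E = 0 := Matrix.single_mul_single_of_ne 1 i j i (Ne.symm hij) 1
      have h1 : ((1 : Matrix (Fin n) (Fin n) ℂ) + E) * (1 - E) = 1 - E * E := by
        noncomm_ring
      have h2 : ((1 : Matrix (Fin n) (Fin n) ℂ) - E) * (1 + E) = 1 - E * E := by
        noncomm_ring
      set u : Matrix.GeneralLinearGroup (Fin n) ℂ :=
        ⟨1 + E, 1 - E, by rw [h1, hE2, sub_zero], by rw [h2, hE2, sub_zero]⟩ with hu
      have := congrArg Units.val (hcomm u)
      simp only [Units.val_mul, hu] at this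
      -- this : (1 + E) * g = g * (1 + E)
      have h3 : E * (g : Matrix (Fin n) (Fin n) ℂ) = (g : Matrix (Fin n) (Fin n) ℂ) * E := by
        have h4 : (1 : Matrix (Fin n) (Fin n) ℂ) * g + E * g =
            (g : Matrix (Fin n) (Fin n) ℂ) * 1 + g * E := by
          rw [← add_mul, ← mul_add]; exact this
        rw [one_mul, mul_one] at h4
        exact add_left_cancel h4
      exact h3
    obtain ⟨c, hc⟩ := Matrix.mem_range_scalar_of_commute_single hpair
    exact ⟨c, by rw [← hc, Matrix.smul_one_eq_diagonal, Matrix.scalar_apply]⟩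
  · rintro ⟨c, hc⟩
    rw [Subgroup.mem_center_iff]
    intro h
    refine Units.ext ?_
    show (h : Matrix (Fin n) (Fin n) ℂ) * g = (g : Matrix (Fin n) (Fin n) ℂ) * h
    rw [hc, mul_smul_comm, smul_mul_assoc, mul_one, one_mul]

/-- Diagonal entries of an invertible diagonal matrix are nonzero. -/
lemma aux_diag_ne_zero {n : ℕ} (g : Matrix.GeneralLinearGroup (Fin n) ℂ)
    (hg : (g : Matrix (Fin n) (Fin n) ℂ).IsDiag) (i : Fin n) :
    (g : Matrix (Fin n) (Fin n) ℂ) i i ≠ 0 := by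
  have hu : IsUnit (g : Matrix (Fin n) (Fin n) ℂ) := ⟨g, rfl⟩
  rw [Matrix.isUnit_iff_isUnit_det] at hu
  have hdet : ((g : Matrix (Fin n) (Fin n) ℂ)).det ≠ 0 := hu.ne_zero
  rw [← hg.diagonal_diag, Matrix.det_diagonal] at hdet
  have := Finset.prod_ne_zero_iff.mp hdet i (Finset.mem_univ i)
  simpa [Matrix.diag] using this

/-- With `s = diag(1, ζ, …, ζ^{n−1})` and `W` the cyclic permutation matrix
in `GL(n,ℂ)` (`ζ` a primitive `n`-th root of unity, `n ≥ 2`), and `T̄` the image in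
`PGL(n,ℂ) = GL(n,ℂ)/center` of the invertible diagonal matrices, the fixed points of
conjugation by `W̄` on `T̄` form exactly the cyclic subgroup generated by `s̄`,
which has order `n`. -/
theorem stmt_1 (n : ℕ) (hn : 2 ≤ n) (ζ : ℂ) (hζ : IsPrimitiveRoot ζ n)
    (S W : Matrix.GeneralLinearGroup (Fin n) ℂ)
    (hS : (S : Matrix (Fin n) (Fin n) ℂ) = Matrix.diagonal fun i : Fin n => ζ ^ (i : ℕ))
    (hW : (W : Matrix (Fin n) (Fin n) ℂ) =
      Matrix.of fun i j : Fin n => if (i : ℕ) = ((j : ℕ) + 1) % n then (1 : ℂ) else 0) :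
    let PGL := Matrix.GeneralLinearGroup (Fin n) ℂ ⧸
      Subgroup.center (Matrix.GeneralLinearGroup (Fin n) ℂ)
    let sbar : PGL := QuotientGroup.mk S
    let Wbar : PGL := QuotientGroup.mk W
    let Tbar : Set PGL := QuotientGroup.mk ''
      {g : Matrix.GeneralLinearGroup (Fin n) ℂ | ((g : Matrix (Fin n) (Fin n) ℂ)).IsDiag}
    ({t : PGL | t ∈ Tbar ∧ Wbar * t * Wbar⁻¹ = t} = (Subgroup.zpowers sbar : Set PGL)) ∧
    orderOf sbar = n := by
  intro PGL sbar Wbar Tbar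
  have npos : 0 < n := by omega
  haveI : NeZero n := ⟨by omega⟩
  have ζ0 : ζ ≠ 0 := hζ.ne_zero (by omega)
  have hζn : ζ ^ n = 1 := hζ.pow_eq_one
  have hmod : ∀ a : ℕ, ζ ^ (a % n) = ζ ^ a := by
    intro a
    conv_rhs => rw [← Nat.div_add_mod a n]
    rw [pow_add, pow_mul, hζn, one_pow, one_mul]
  have hSpow : ∀ m : ℕ, ((S ^ m : Matrix.GeneralLinearGroup (Fin n) ℂ) :
      Matrix (Fin n) (Fin n) ℂ) = Matrix.diagonal fun i : Fin n => ζ ^ ((i : ℕ) * m) := by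
    intro m
    rw [Units.val_pow_eq_pow_val, hS, Matrix.diagonal_pow]
    have : ((fun i : Fin n => ζ ^ (i : ℕ)) ^ m) = fun i : Fin n => ζ ^ ((i : ℕ) * m) := by
      funext i; rw [Pi.pow_apply, ← pow_mul]
    rw [this]
  -- key fixed-point property of powers of S
  have hfixpow : ∀ m : ℕ,
      (QuotientGroup.mk (W * S ^ m * W⁻¹) : PGL) = QuotientGroup.mk (S ^ m) := by
    intro m
    set z : Matrix.GeneralLinearGroup (Fin n) ℂ :=
      Units.map (Matrix.scalar (Fin n)).toMonoidHom (Units.mk0 (ζ ^ m) (pow_ne_zero m ζ0))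
      with hzdef
    have hzval : (z : Matrix (Fin n) (Fin n) ℂ) = (ζ ^ m) • 1 := by
      rw [hzdef]
      show Matrix.scalar (Fin n) (ζ ^ m) = (ζ ^ m) • 1
      rw [Matrix.smul_one_eq_diagonal, Matrix.scalar_apply]
    have hzc : z ∈ Subgroup.center (Matrix.GeneralLinearGroup (Fin n) ℂ) :=
      (aux_center_iff z).mpr ⟨ζ ^ m, hzval⟩
    have hswap : S ^ m * W = z * (W * S ^ m) := by
      refine Units.ext ?_
      show ((S ^ m : Matrix.GeneralLinearGroup (Fin n) ℂ) : Matrix (Fin n) (Fin n) ℂ) * W =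
        (z : Matrix (Fin n) (Fin n) ℂ) *
          ((W : Matrix (Fin n) (Fin n) ℂ) * ((S ^ m : Matrix.GeneralLinearGroup (Fin n) ℂ) :
            Matrix (Fin n) (Fin n) ℂ))
      rw [hSpow, hzval, hW]
      ext i j
      rw [Matrix.diagonal_mul, smul_mul_assoc, one_mul, Matrix.smul_apply, Matrix.mul_diagonal]
      simp only [Matrix.of_apply]
      by_cases h : (i : ℕ) = ((j : ℕ) + 1) % n
      · rw [if_pos h, mul_one, one_mul, smul_eq_mul, h]
        rw [pow_mul, hmod, ← pow_mul, add_mul, one_mul, pow_add]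
        ring
      · rw [if_neg h, mul_zero, zero_mul, smul_eq_mul, mul_zero]
    have hconj : W * S ^ m * W⁻¹ = z⁻¹ * S ^ m := by
      have h1 : W * S ^ m = z⁻¹ * (S ^ m * W) := by rw [hswap]; group
      rw [h1]; group
    rw [hconj, QuotientGroup.mk_mul, QuotientGroup.mk_inv,
      (QuotientGroup.eq_one_iff z).mpr hzc, inv_one, one_mul]
  -- order of sbar
  have horder : orderOf sbar = n := by
    rw [orderOf_eq_iff npos]
    constructor
    · show (QuotientGroup.mk S : PGL) ^ n = 1
      rw [← QuotientGroup.mk_pow, QuotientGroup.eq_one_iff]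
      refine (aux_center_iff _).mpr ⟨1, ?_⟩
      rw [hSpow]
      have : (fun i : Fin n => ζ ^ ((i : ℕ) * n)) = fun _ => (1 : ℂ) := by
        funext i; rw [mul_comm, pow_mul, hζn, one_pow]
      rw [this, Matrix.diagonal_one, one_smul]
    · intro m hmn hm0 h1
      have h1' : (QuotientGroup.mk (S ^ m) : PGL) = 1 := by
        rw [QuotientGroup.mk_pow]; exact h1
      rw [QuotientGroup.eq_one_iff] at h1'
      obtain ⟨c, hc⟩ := (aux_center_iff _).mp h1'
      rw [hSpow, Matrix.smul_one_eq_diagonal] at hc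
      have hval := Matrix.ext_iff.mpr hc
      have h00 := hval ⟨0, by omega⟩ ⟨0, by omega⟩
      have h11 := hval ⟨1, by omega⟩ ⟨1, by omega⟩
      rw [Matrix.diagonal_apply_eq, Matrix.diagonal_apply_eq] at h00 h11
      simp only [zero_mul, pow_zero, one_mul] at h00 h11
      exact hζ.pow_ne_one_of_pos_of_lt hm0.ne' hmn (by rw [h11, ← h00])
  refine ⟨?_, horder⟩
  ext t
  simp only [Set.mem_setOf_eq, SetLike.mem_coe]
  constructor
  · rintro ⟨⟨g, hg, rfl⟩, hfix⟩
    have hfix' : (QuotientGroup.mk (W * g * W⁻¹) : PGL) = QuotientGroup.mk g := by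
      rw [QuotientGroup.mk_mul, QuotientGroup.mk_mul, QuotientGroup.mk_inv]
      exact hfix
    have hz : g⁻¹ * (W * g * W⁻¹) ∈
        Subgroup.center (Matrix.GeneralLinearGroup (Fin n) ℂ) :=
      QuotientGroup.eq.mp hfix'.symm
    obtain ⟨c, hc⟩ := (aux_center_iff _).mp hz
    have h3 : W * g = g * (g⁻¹ * (W * g * W⁻¹)) * W := by group
    have hmat : (W : Matrix (Fin n) (Fin n) ℂ) * g =
        (g : Matrix (Fin n) (Fin n) ℂ) * (c • 1) * W := by
      have := congrArg Units.val h3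
      simp only [Units.val_mul] at this hc
      rw [hc] at this
      exact this
    set d : Fin n → ℂ := fun i => (g : Matrix (Fin n) (Fin n) ℂ) i i with hd
    have hgd : (g : Matrix (Fin n) (Fin n) ℂ) = Matrix.diagonal d := (hg.diagonal_diag).symm
    have hentry : ∀ i j : Fin n,
        (W : Matrix (Fin n) (Fin n) ℂ) i j * d j = d i * c * (W : Matrix _ _ ℂ) i j := by
      intro i j
      have := Matrix.ext_iff.mpr hmat i j
      rw [hgd, Matrix.smul_one_eq_diagonal, Matrix.diagonal_mul_diagonal] at this
      rw [Matrix.mul_diagonal, Matrix.diagonal_mul] at this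
      exact this
    have hrec : ∀ j : Fin n, d j = c * d ⟨((j : ℕ) + 1) % n, Nat.mod_lt _ npos⟩ := by
      intro j
      have := hentry ⟨((j : ℕ) + 1) % n, Nat.mod_lt _ npos⟩ j
      rw [hW] at this
      simp at this
      rw [this]; ring
    set D : ℕ → ℂ := fun k => d ⟨k % n, Nat.mod_lt _ npos⟩ with hD
    have hDrec : ∀ k : ℕ, D k = c * D (k + 1) := by
      intro k
      have h := hrec ⟨k % n, Nat.mod_lt _ npos⟩
      have hidx : ((k % n : ℕ) + 1) % n = (k + 1) % n := by
        conv_rhs => rw [Nat.add_mod, Nat.mod_eq_of_lt (show 1 < n by omega)]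
      simpa only [hD, hidx] using h
    have hDpow : ∀ k : ℕ, D 0 = c ^ k * D k := by
      intro k
      induction k with
      | zero => rw [pow_zero, one_mul]
      | succ k ih => rw [ih, hDrec k, pow_succ]; ring
    have hD0 : D 0 ≠ 0 := aux_diag_ne_zero g hg _
    have hcn : c ^ n = 1 := by
      have h := hDpow n
      have hDn : D n = D 0 := congrArg d (Fin.ext (by simp))
      rw [hDn] at h
      have h2 : (c ^ n - 1) * D 0 = 0 := by rw [sub_mul, one_mul, ← h]; ring
      rcases mul_eq_zero.mp h2 with h' | h'
      · linear_combination h'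
      · exact absurd h' hD0
    have hc0 : c ≠ 0 := by
      intro h; rw [h, zero_pow (by omega : n ≠ 0)] at hcn; exact zero_ne_one hcn
    have hcinv : (c⁻¹) ^ n = 1 := by rw [inv_pow, hcn, inv_one]
    obtain ⟨m, hmn, hbm⟩ := hζ.eq_pow_of_pow_eq_one hcinv
    have hDk : ∀ k : ℕ, D k = (c⁻¹) ^ k * D 0 := by
      intro k
      induction k with
      | zero => rw [pow_zero, one_mul]
      | succ k ih =>
        have h := hDrec k
        rw [ih] at h
        have h2 : D (k + 1) = c⁻¹ * (c * D (k + 1)) := by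
          rw [← mul_assoc, inv_mul_cancel₀ hc0, one_mul]
        rw [h2, ← h, pow_succ]
        ring
    have hdi : ∀ i : Fin n, d i = ζ ^ (m * (i : ℕ)) * D 0 := by
      intro i
      have hdD : d i = D (i : ℕ) := congrArg d (Fin.ext (Nat.mod_eq_of_lt i.isLt).symm)
      rw [hdD, hDk, ← hbm, ← pow_mul]
    -- (S^m)⁻¹ * g is central
    have hSminv : (((S ^ m)⁻¹ : Matrix.GeneralLinearGroup (Fin n) ℂ) :
        Matrix (Fin n) (Fin n) ℂ) = Matrix.diagonal fun i : Fin n => (ζ ^ ((i : ℕ) * m))⁻¹ := by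
      refine Units.inv_eq_of_mul_eq_one_right ?_
      rw [hSpow, Matrix.diagonal_mul_diagonal]
      have : (fun i : Fin n => ζ ^ ((i : ℕ) * m) * (ζ ^ ((i : ℕ) * m))⁻¹) =
          fun _ => (1 : ℂ) := funext fun i => mul_inv_cancel₀ (pow_ne_zero _ ζ0)
      rw [this, Matrix.diagonal_one]
    have hcen : (S ^ m)⁻¹ * g ∈ Subgroup.center (Matrix.GeneralLinearGroup (Fin n) ℂ) := by
      refine (aux_center_iff _).mpr ⟨D 0, ?_⟩
      show (((S ^ m)⁻¹ : Matrix.GeneralLinearGroup (Fin n) ℂ) : Matrix (Fin n) (Fin n) ℂ) *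
        (g : Matrix (Fin n) (Fin n) ℂ) = (D 0) • 1
      rw [hSminv, hgd, Matrix.diagonal_mul_diagonal, Matrix.smul_one_eq_diagonal]
      have : (fun i : Fin n => (ζ ^ ((i : ℕ) * m))⁻¹ * d i) = fun _ : Fin n => D 0 := by
        funext i
        rw [hdi i, mul_comm m (i : ℕ), ← mul_assoc, inv_mul_cancel₀ (pow_ne_zero _ ζ0), one_mul]
      rw [this]
    have hfin : (QuotientGroup.mk (S ^ m) : PGL) = QuotientGroup.mk g :=
      QuotientGroup.eq.mpr hcen
    refine Subgroup.mem_zpowers_iff.mpr ⟨(m : ℤ), ?_⟩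
    rw [zpow_natCast]
    show (QuotientGroup.mk S : PGL) ^ m = QuotientGroup.mk g
    rw [← QuotientGroup.mk_pow]
    exact hfin
  · intro ht
    obtain ⟨k, hk⟩ := Subgroup.mem_zpowers_iff.mp ht
    rw [← hk]
    have hmk : sbar ^ k = sbar ^ ((k % (n : ℤ)).toNat) := by
      calc sbar ^ k = sbar ^ (k % ((orderOf sbar : ℕ) : ℤ)) := (zpow_mod_orderOf sbar k).symm
        _ = sbar ^ (((k % (n : ℤ)).toNat : ℤ)) := by
            rw [horder, Int.toNat_of_nonneg (Int.emod_nonneg k (by exact_mod_cast npos.ne'))]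
        _ = sbar ^ ((k % (n : ℤ)).toNat) := zpow_natCast _ _
    rw [hmk]
    set m : ℕ := (k % (n : ℤ)).toNat
    have hsm : sbar ^ m = (QuotientGroup.mk (S ^ m) : PGL) :=
      (QuotientGroup.mk_pow _ S m).symm
    constructor
    · refine ⟨S ^ m, ?_, hsm.symm⟩
      show ((S ^ m : Matrix.GeneralLinearGroup (Fin n) ℂ) : Matrix (Fin n) (Fin n) ℂ).IsDiag
      rw [hSpow]
      exact Matrix.isDiag_diagonal _
    · show Wbar * sbar ^ m * Wbar⁻¹ = sbar ^ m
      rw [hsm]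
      show (QuotientGroup.mk W : PGL) * QuotientGroup.mk (S ^ m) *
        (QuotientGroup.mk W : PGL)⁻¹ = QuotientGroup.mk (S ^ m)
      rw [← QuotientGroup.mk_inv, ← QuotientGroup.mk_mul, ← QuotientGroup.mk_mul]
      exact hfixpow m
end

section
/- Let n ≥ 2, let ζ ∈ ℂ be a primitive n-th root of unity, s = diag(1, ζ, …, ζ^{n−1}) ∈ GL(n,ℂ), and W ∈ GL(n,ℂ) the cyclic permutation matrix with W·eᵢ = e_{i+1 (mod n)}. Let s̄, W̄ denote the images of s, W in PGL(n,ℂ). Then the common centralizer {g ∈ PGL(n,ℂ) : g s̄ g⁻¹ = s̄ and g W̄ g⁻¹ = W̄} equals the subgroup generated by s̄ and W̄; in particular it is a finite abelian group of order n². -/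
open Matrix
open Fin.NatCast

namespace Stmt2Aux

variable {n : ℕ}

abbrev GLn (n : ℕ) := Matrix.GeneralLinearGroup (Fin n) ℂ

lemma scalar_central (X : GLn n) (c : ℂ)
    (h : (X : Matrix (Fin n) (Fin n) ℂ) = c • 1) :
    X ∈ Subgroup.center (GLn n) := by
  rw [Subgroup.mem_center_iff]
  intro g
  refine Units.ext ?_
  rw [Units.val_mul, Units.val_mul, h, Matrix.smul_mul, Matrix.mul_smul,
    Matrix.one_mul, Matrix.mul_one]

lemma central_scalar (hn : 2 ≤ n) (X : GLn n)
    (h : X ∈ Subgroup.center (GLn n)) :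
    ∃ c : ℂ, c ≠ 0 ∧ (X : Matrix (Fin n) (Fin n) ℂ) = c • 1 := by
  have : NeZero n := ⟨by omega⟩
  have hnt : Nontrivial (Fin n) := Fin.nontrivial_iff_two_le.mpr hn
  rw [Subgroup.mem_center_iff] at h
  -- X commutes with all elementary "transvections"
  have key : ∀ i j : Fin n, i ≠ j →
      (X : Matrix (Fin n) (Fin n) ℂ) * single i j 1
        = single i j 1 * (X : Matrix (Fin n) (Fin n) ℂ) := by
    intro i j hij
    set E : Matrix (Fin n) (Fin n) ℂ := single i j 1 with hE
    have hE2 : E * E = 0 := Matrix.single_mul_single_of_ne (c:=(1:ℂ)) i j i (Ne.symm hij) 1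
    have hmul : ((1 : Matrix (Fin n) (Fin n) ℂ) + E) * (1 - E) = 1 := by
      have : ((1 : Matrix (Fin n) (Fin n) ℂ) + E) * (1 - E) = 1 + E - E - E * E := by
        noncomm_ring
      rw [this, hE2]; abel
    have hmul' : ((1 : Matrix (Fin n) (Fin n) ℂ) - E) * (1 + E) = 1 := by
      have : ((1 : Matrix (Fin n) (Fin n) ℂ) - E) * (1 + E) = 1 + E - E - E * E := by
        noncomm_ring
      rw [this, hE2]; abel
    set T : GLn n := ⟨1 + E, 1 - E, hmul, hmul'⟩ with hT
    have := h T
    have hval : ((T * X : GLn n) : Matrix (Fin n) (Fin n) ℂ)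
        = ((X * T : GLn n) : Matrix (Fin n) (Fin n) ℂ) := by rw [this]
    rw [Units.val_mul, Units.val_mul] at hval
    have hTv : (T : Matrix (Fin n) (Fin n) ℂ) = 1 + E := rfl
    rw [hTv, add_mul, mul_add, one_mul, mul_one] at hval
    exact (add_left_cancel hval).symm
  have hoff : ∀ p q : Fin n, p ≠ q → (X : Matrix (Fin n) (Fin n) ℂ) p q = 0 := by
    intro p q hpq
    obtain ⟨j, hj⟩ := exists_ne q
    have hk := key q j (Ne.symm hj)
    have hentry := congrFun (congrFun hk p) j
    rw [Matrix.mul_single_apply_same, Matrix.single_mul_apply_of_ne 1 q j p j hpq] at hentry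
    simpa using hentry
  have hdiag : ∀ p q : Fin n,
      (X : Matrix (Fin n) (Fin n) ℂ) p p = (X : Matrix (Fin n) (Fin n) ℂ) q q := by
    intro p q
    rcases eq_or_ne p q with rfl | hpq
    · rfl
    · have hk := key p q hpq
      have hentry := congrFun (congrFun hk p) q
      rw [Matrix.mul_single_apply_same, Matrix.single_mul_apply_same] at hentry
      simpa using hentry
  set c : ℂ := (X : Matrix (Fin n) (Fin n) ℂ) 0 0 with hc
  have hXeq : (X : Matrix (Fin n) (Fin n) ℂ) = c • 1 := by
    ext p q
    rcases eq_or_ne p q with rfl | hpq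
    · rw [hdiag p 0, Matrix.smul_apply, Matrix.one_apply_eq, smul_eq_mul, mul_one]
    · rw [hoff p q hpq, Matrix.smul_apply, Matrix.one_apply_ne hpq, smul_eq_mul, mul_zero]
  refine ⟨c, fun h0 => ?_, hXeq⟩
  have hu : IsUnit (X : Matrix (Fin n) (Fin n) ℂ).det := (isUnit_iff_isUnit_det _).mp X.isUnit
  rw [hXeq, Matrix.det_smul, h0] at hu
  simp [zero_pow (show n ≠ 0 by omega), Fintype.card_fin] at hu


lemma pow_mod_eq {G : Type*} [Monoid G] {x : G} (hx : x ^ n = 1) (t : ℕ) :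
    x ^ t = x ^ (t % n) := by
  conv_lhs => rw [← Nat.div_add_mod t n]
  rw [pow_add, pow_mul, hx, one_pow, one_mul]

lemma pow_cancel {G : Type*} [Monoid G] {x : G} (hx : x ^ n = 1) {a : ℕ} (ha : a < n) :
    x ^ (a + (n - a) % n) = 1 := by
  rcases Nat.eq_zero_or_pos a with rfl | hapos
  · simp [Nat.mod_self]
  · rw [Nat.mod_eq_of_lt (by omega), show a + (n - a) = n by omega, hx]

lemma mul_rearrange {G : Type*} [Group G] {x y : G} (hc : Commute x y) (a b c d : ℕ) :
    (x ^ a * y ^ b) * (x ^ c * y ^ d) = x ^ (a + c) * y ^ (b + d) := by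
  have hcomm : y ^ b * x ^ c = x ^ c * y ^ b := (hc.symm.pow_pow b c).eq
  rw [pow_add, pow_add, show x ^ a * y ^ b * (x ^ c * y ^ d)
    = x ^ a * (y ^ b * x ^ c) * y ^ d by group, hcomm]
  group

lemma rep_lemma {G : Type*} [Group G] (hn : 2 ≤ n) {x y : G} (hc : Commute x y)
    (hx : x ^ n = 1) (hy : y ^ n = 1) :
    ∀ g ∈ Subgroup.closure {x, y}, ∃ a b : ℕ, a < n ∧ b < n ∧ g = x ^ a * y ^ b := by
  intro g hg
  induction hg using Subgroup.closure_induction with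
  | mem z hz =>
    rcases hz with rfl | rfl
    · exact ⟨1, 0, by omega, by omega, by simp⟩
    · exact ⟨0, 1, by omega, by omega, by simp⟩
  | one => exact ⟨0, 0, by omega, by omega, by simp⟩
  | mul u v hu hv ihu ihv =>
    obtain ⟨a, b, ha, hb, rfl⟩ := ihu
    obtain ⟨cc, dd, hcc, hdd, rfl⟩ := ihv
    refine ⟨(a + cc) % n, (b + dd) % n, Nat.mod_lt _ (by omega), Nat.mod_lt _ (by omega), ?_⟩
    rw [← pow_mod_eq hx, ← pow_mod_eq hy, mul_rearrange hc]
  | inv u hu ihu =>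
    obtain ⟨a, b, ha, hb, rfl⟩ := ihu
    refine ⟨(n - a) % n, (n - b) % n, Nat.mod_lt _ (by omega), Nat.mod_lt _ (by omega), ?_⟩
    have h1 : (x ^ a * y ^ b) * (x ^ ((n - a) % n) * y ^ ((n - b) % n)) = 1 := by
      rw [mul_rearrange hc, pow_cancel hx ha, pow_cancel hy hb, one_mul]
    exact inv_eq_of_mul_eq_one_right h1

lemma card_lemma {G : Type*} [Group G] (hn : 2 ≤ n) {x y : G} (hc : Commute x y)
    (hx : x ^ n = 1) (hy : y ^ n = 1)
    (hinj : ∀ a b c d : ℕ, a < n → b < n → c < n → d < n →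
      x ^ a * y ^ b = x ^ c * y ^ d → a = c ∧ b = d) :
    Nat.card (Subgroup.closure {x, y} : Subgroup G) = n ^ 2 := by
  have hrep := rep_lemma hn hc hx hy
  have hmemf : ∀ p : Fin n × Fin n,
      x ^ (p.1 : ℕ) * y ^ (p.2 : ℕ) ∈ Subgroup.closure {x, y} := by
    intro p
    have hxm : x ∈ Subgroup.closure {x, y} := Subgroup.subset_closure (by simp)
    have hym : y ∈ Subgroup.closure {x, y} := Subgroup.subset_closure (by simp)
    exact mul_mem (pow_mem hxm _) (pow_mem hym _)
  let f : Fin n × Fin n → (Subgroup.closure {x, y} : Subgroup G) :=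
    fun p => ⟨_, hmemf p⟩
  have hfbij : Function.Bijective f := by
    constructor
    · rintro ⟨a, b⟩ ⟨cc, dd⟩ hEq
      have hEq' : x ^ (a : ℕ) * y ^ (b : ℕ) = x ^ (cc : ℕ) * y ^ (dd : ℕ) :=
        Subtype.ext_iff.mp hEq
      obtain ⟨hac, hbd⟩ := hinj _ _ _ _ a.isLt b.isLt cc.isLt dd.isLt hEq'
      exact Prod.ext (Fin.ext hac) (Fin.ext hbd)
    · rintro ⟨g, hg⟩
      obtain ⟨a, b, ha, hb, rfl⟩ := hrep g hg
      exact ⟨(⟨a, ha⟩, ⟨b, hb⟩), Subtype.ext rfl⟩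
  calc Nat.card (Subgroup.closure {x, y} : Subgroup G)
      = Nat.card (Fin n × Fin n) := (Nat.card_eq_of_bijective f hfbij).symm
    _ = n ^ 2 := by simp [Nat.card_eq_fintype_card, sq]

lemma fin_val_add_natCast [NeZero n] (j : Fin n) (b : ℕ) :
    ((j + (b : Fin n) : Fin n) : ℕ) = ((j : ℕ) + b) % n := by
  rw [Fin.add_def, Fin.val_natCast]
  conv_rhs => rw [Nat.add_mod, Nat.mod_eq_of_lt j.isLt]


variable {ζ : ℂ} {S W : GLn n}

lemma W_apply [NeZero n] (hn : 2 ≤ n)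
    (hW : (W : Matrix (Fin n) (Fin n) ℂ) =
      Matrix.of fun i j : Fin n => if (i : ℕ) = ((j : ℕ) + 1) % n then (1 : ℂ) else 0) :
    (W : Matrix (Fin n) (Fin n) ℂ)
      = Matrix.of fun i j => if i = j + 1 then (1 : ℂ) else 0 := by
  rw [hW]
  ext i j
  simp only [of_apply]
  refine if_congr ?_ rfl rfl
  have h1 : ((j + 1 : Fin n) : ℕ) = ((j : ℕ) + 1) % n := by
    simpa using fin_val_add_natCast j 1
  rw [Fin.ext_iff, h1]

lemma W_pow_apply [NeZero n] (hn : 2 ≤ n)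
    (hW : (W : Matrix (Fin n) (Fin n) ℂ) =
      Matrix.of fun i j : Fin n => if (i : ℕ) = ((j : ℕ) + 1) % n then (1 : ℂ) else 0)
    (b : ℕ) :
    ((W ^ b : GLn n) : Matrix (Fin n) (Fin n) ℂ)
      = Matrix.of fun i j => if i = j + (b : Fin n) then (1 : ℂ) else 0 := by
  induction b with
  | zero =>
    ext i j
    simp [Matrix.one_apply]
  | succ b ih =>
    rw [pow_succ, Units.val_mul, ih, W_apply hn hW]
    ext i j
    rw [Matrix.mul_apply]
    simp only [of_apply]
    rw [Finset.sum_eq_single (j + 1)]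
    · have harr : (j + 1) + (b : Fin n) = j + (((b : ℕ) + 1 : ℕ) : Fin n) := by
        push_cast
        abel
      simp [harr]
    · intro k _ hk
      simp [hk]
    · simp

lemma S_pow_apply (hS : (S : Matrix (Fin n) (Fin n) ℂ)
      = Matrix.diagonal fun i : Fin n => ζ ^ (i : ℕ)) (a : ℕ) :
    ((S ^ a : GLn n) : Matrix (Fin n) (Fin n) ℂ)
      = Matrix.diagonal fun i : Fin n => ζ ^ (a * (i : ℕ)) := by
  rw [Units.val_pow_eq_pow_val, hS, Matrix.diagonal_pow]
  have hfun : ((fun i : Fin n => ζ ^ (i : ℕ)) ^ a) = fun i : Fin n => ζ ^ (a * (i : ℕ)) := by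
    funext i
    rw [Pi.pow_apply, ← pow_mul, mul_comm]
  rw [hfun]

lemma SW_entry [NeZero n] (hn : 2 ≤ n)
    (hS : (S : Matrix (Fin n) (Fin n) ℂ)
      = Matrix.diagonal fun i : Fin n => ζ ^ (i : ℕ))
    (hW : (W : Matrix (Fin n) (Fin n) ℂ) =
      Matrix.of fun i j : Fin n => if (i : ℕ) = ((j : ℕ) + 1) % n then (1 : ℂ) else 0)
    (a b : ℕ) (i j : Fin n) :
    ((S ^ a * W ^ b : GLn n) : Matrix (Fin n) (Fin n) ℂ) i j
      = if i = j + (b : Fin n) then ζ ^ (a * (i : ℕ)) else 0 := by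
  rw [Units.val_mul, S_pow_apply hS, W_pow_apply hn hW, Matrix.diagonal_mul]
  simp only [of_apply, mul_ite, mul_one, mul_zero]


lemma zeta_pow_mod (hζ : IsPrimitiveRoot ζ n) (t : ℕ) : ζ ^ (t % n) = ζ ^ t :=
  (pow_mod_eq hζ.pow_eq_one t).symm

lemma SW_comm [NeZero n] (hn : 2 ≤ n) (hζ : IsPrimitiveRoot ζ n)
    (hS : (S : Matrix (Fin n) (Fin n) ℂ)
      = Matrix.diagonal fun i : Fin n => ζ ^ (i : ℕ))
    (hW : (W : Matrix (Fin n) (Fin n) ℂ) =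
      Matrix.of fun i j : Fin n => if (i : ℕ) = ((j : ℕ) + 1) % n then (1 : ℂ) else 0)
    (k : ℕ) :
    (S : Matrix (Fin n) (Fin n) ℂ) * ((W ^ k : GLn n) : Matrix (Fin n) (Fin n) ℂ)
      = ζ ^ k • (((W ^ k : GLn n) : Matrix (Fin n) (Fin n) ℂ)
          * (S : Matrix (Fin n) (Fin n) ℂ)) := by
  ext i j
  rw [hS, W_pow_apply hn hW, Matrix.smul_apply, Matrix.diagonal_mul, Matrix.mul_diagonal]
  simp only [of_apply, smul_eq_mul]
  by_cases h : i = j + (k : Fin n)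
  · simp only [if_pos h]
    have hval : (i : ℕ) = ((j : ℕ) + k) % n := by rw [h]; exact fin_val_add_natCast j k
    rw [hval, zeta_pow_mod hζ, pow_add]
    ring
  · simp [h]

lemma S_order (hζ : IsPrimitiveRoot ζ n)
    (hS : (S : Matrix (Fin n) (Fin n) ℂ)
      = Matrix.diagonal fun i : Fin n => ζ ^ (i : ℕ)) :
    S ^ n = 1 := by
  refine Units.ext ?_
  rw [S_pow_apply hS, Units.val_one]
  have hfun : (fun i : Fin n => ζ ^ (n * (i : ℕ))) = fun _ => (1 : ℂ) := by
    funext i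
    rw [pow_mul, hζ.pow_eq_one, one_pow]
  rw [hfun, Matrix.diagonal_one]

lemma W_order [NeZero n] (hn : 2 ≤ n)
    (hW : (W : Matrix (Fin n) (Fin n) ℂ) =
      Matrix.of fun i j : Fin n => if (i : ℕ) = ((j : ℕ) + 1) % n then (1 : ℂ) else 0) :
    W ^ n = 1 := by
  refine Units.ext ?_
  rw [W_pow_apply hn hW, Units.val_one]
  ext i j
  simp [Matrix.one_apply, Fin.natCast_self]

lemma mk_eq_of_smul {u v : GLn n} (c : ℂ) (h : (v : Matrix (Fin n) (Fin n) ℂ)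
      = c • (u : Matrix (Fin n) (Fin n) ℂ)) :
    (QuotientGroup.mk u : GLn n ⧸ Subgroup.center (GLn n)) = QuotientGroup.mk v := by
  apply (QuotientGroup.eq).mpr
  apply scalar_central _ c
  have h1 : ((u⁻¹ : GLn n) : Matrix (Fin n) (Fin n) ℂ) * (u : Matrix (Fin n) (Fin n) ℂ)
      = 1 := by
    rw [← Units.val_mul, inv_mul_cancel, Units.val_one]
  rw [Units.val_mul, h, Matrix.mul_smul, h1]

lemma bar_comm [NeZero n] (hn : 2 ≤ n) (hζ : IsPrimitiveRoot ζ n)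
    (hS : (S : Matrix (Fin n) (Fin n) ℂ)
      = Matrix.diagonal fun i : Fin n => ζ ^ (i : ℕ))
    (hW : (W : Matrix (Fin n) (Fin n) ℂ) =
      Matrix.of fun i j : Fin n => if (i : ℕ) = ((j : ℕ) + 1) % n then (1 : ℂ) else 0) :
    Commute (QuotientGroup.mk S : GLn n ⧸ Subgroup.center (GLn n)) (QuotientGroup.mk W) := by
  have hc1 : ((S * W : GLn n) : Matrix (Fin n) (Fin n) ℂ)
      = ζ • ((W * S : GLn n) : Matrix (Fin n) (Fin n) ℂ) := by
    rw [Units.val_mul, Units.val_mul]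
    simpa [pow_one] using SW_comm hn hζ hS hW 1
  show _ = _
  rw [← QuotientGroup.mk_mul, ← QuotientGroup.mk_mul]
  exact (mk_eq_of_smul ζ hc1).symm


lemma inj_lemma [NeZero n] (hn : 2 ≤ n) (hζ : IsPrimitiveRoot ζ n)
    (hS : (S : Matrix (Fin n) (Fin n) ℂ)
      = Matrix.diagonal fun i : Fin n => ζ ^ (i : ℕ))
    (hW : (W : Matrix (Fin n) (Fin n) ℂ) =
      Matrix.of fun i j : Fin n => if (i : ℕ) = ((j : ℕ) + 1) % n then (1 : ℂ) else 0)
    {a b c d : ℕ} (ha : a < n) (hb : b < n) (hc : c < n) (hd : d < n)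
    (h : (QuotientGroup.mk (S ^ a * W ^ b) : GLn n ⧸ Subgroup.center (GLn n))
        = QuotientGroup.mk (S ^ c * W ^ d)) :
    a = c ∧ b = d := by
  rw [QuotientGroup.eq] at h
  obtain ⟨lam, hlam0, hlam⟩ := central_scalar hn _ h
  have hval : ((S ^ c * W ^ d : GLn n) : Matrix (Fin n) (Fin n) ℂ)
      = lam • ((S ^ a * W ^ b : GLn n) : Matrix (Fin n) (Fin n) ℂ) := by
    have heq : (S ^ c * W ^ d : GLn n)
        = (S ^ a * W ^ b) * ((S ^ a * W ^ b)⁻¹ * (S ^ c * W ^ d)) := by group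
    rw [heq, Units.val_mul, hlam, Matrix.mul_smul, Matrix.mul_one]
  have hζ0 : ζ ≠ 0 := hζ.ne_zero (by omega)
  have hbdF : (b : Fin n) = (d : Fin n) := by
    by_contra hne
    have h1 := congrFun (congrFun hval (b : Fin n)) 0
    rw [Matrix.smul_apply, SW_entry hn hS hW, SW_entry hn hS hW, smul_eq_mul] at h1
    rw [if_neg (by simpa using hne), if_pos (zero_add _).symm] at h1
    exact (mul_ne_zero hlam0 (pow_ne_zero _ hζ0)) h1.symm
  have hbd : b = d := by
    have hv := congrArg Fin.val hbdF
    rwa [Fin.val_cast_of_lt hb, Fin.val_cast_of_lt hd] at hv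
  have hii : ∀ i : Fin n, ζ ^ (c * (i : ℕ)) = lam * ζ ^ (a * (i : ℕ)) := by
    intro i
    have h1 := congrFun (congrFun hval i) (i - (b : Fin n))
    rw [Matrix.smul_apply, SW_entry hn hS hW, SW_entry hn hS hW, smul_eq_mul] at h1
    have hcond : i = (i - (b : Fin n)) + (b : Fin n) := (sub_add_cancel i _).symm
    rw [if_pos (by rw [← hbdF]; exact hcond), if_pos hcond] at h1
    exact h1
  have hlam1 : lam = 1 := by
    have h0 := hii 0
    simpa using h0.symm
  have h1 := hii 1
  rw [hlam1, one_mul] at h1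
  have hv1 : ((1 : Fin n) : ℕ) = 1 := by
    rw [Fin.val_one' n, Nat.mod_eq_of_lt (by omega)]
  rw [hv1, mul_one, mul_one] at h1
  exact ⟨(hζ.pow_inj hc ha h1).symm, hbd⟩


lemma forward [NeZero n] (hn : 2 ≤ n) (hζ : IsPrimitiveRoot ζ n)
    (hS : (S : Matrix (Fin n) (Fin n) ℂ)
      = Matrix.diagonal fun i : Fin n => ζ ^ (i : ℕ))
    (hW : (W : Matrix (Fin n) (Fin n) ℂ) =
      Matrix.of fun i j : Fin n => if (i : ℕ) = ((j : ℕ) + 1) % n then (1 : ℂ) else 0)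
    (g : GLn n ⧸ Subgroup.center (GLn n))
    (h1 : g * QuotientGroup.mk S * g⁻¹ = QuotientGroup.mk S)
    (h2 : g * QuotientGroup.mk W * g⁻¹ = QuotientGroup.mk W) :
    g ∈ Subgroup.closure {(QuotientGroup.mk S : GLn n ⧸ Subgroup.center (GLn n)),
      QuotientGroup.mk W} := by
  have hζ0 : ζ ≠ 0 := hζ.ne_zero (by omega)
  obtain ⟨G, rfl⟩ := QuotientGroup.mk_surjective g
  have scalar_rel : ∀ V : GLn n,
      (QuotientGroup.mk G : GLn n ⧸ Subgroup.center (GLn n)) * QuotientGroup.mk V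
          * (QuotientGroup.mk G)⁻¹ = QuotientGroup.mk V →
      ∃ c : ℂ, c ≠ 0 ∧ (V : Matrix (Fin n) (Fin n) ℂ) * (G : Matrix (Fin n) (Fin n) ℂ)
        = c • ((G : Matrix (Fin n) (Fin n) ℂ) * (V : Matrix (Fin n) (Fin n) ℂ)) := by
    intro V hV
    have hV' : (QuotientGroup.mk (G * V * G⁻¹) : GLn n ⧸ Subgroup.center (GLn n))
        = QuotientGroup.mk V := by
      rw [QuotientGroup.mk_mul, QuotientGroup.mk_mul, QuotientGroup.mk_inv]
      exact hV
    rw [QuotientGroup.eq] at hV'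
    obtain ⟨c, hc0, hc⟩ := central_scalar hn _ hV'
    refine ⟨c, hc0, ?_⟩
    have hXS : (V : Matrix (Fin n) (Fin n) ℂ)
        = c • ((G * V * G⁻¹ : GLn n) : Matrix (Fin n) (Fin n) ℂ) := by
      have hV2 : (V : GLn n) = (G * V * G⁻¹) * ((G * V * G⁻¹)⁻¹ * V) := by group
      calc (V : Matrix (Fin n) (Fin n) ℂ)
          = (((G * V * G⁻¹) * ((G * V * G⁻¹)⁻¹ * V) : GLn n) : Matrix (Fin n) (Fin n) ℂ) := by
            rw [← hV2]
        _ = ((G * V * G⁻¹ : GLn n) : Matrix (Fin n) (Fin n) ℂ) * (c • 1) := by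
            rw [Units.val_mul, hc]
        _ = c • ((G * V * G⁻¹ : GLn n) : Matrix (Fin n) (Fin n) ℂ) := by
            rw [Matrix.mul_smul, Matrix.mul_one]
    have hXG : ((G * V * G⁻¹ : GLn n) : Matrix (Fin n) (Fin n) ℂ)
        * (G : Matrix (Fin n) (Fin n) ℂ)
        = (G : Matrix (Fin n) (Fin n) ℂ) * (V : Matrix (Fin n) (Fin n) ℂ) := by
      rw [← Units.val_mul, show (G * V * G⁻¹) * G = G * V by group, Units.val_mul]
    calc (V : Matrix (Fin n) (Fin n) ℂ) * (G : Matrix (Fin n) (Fin n) ℂ)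
        = (c • ((G * V * G⁻¹ : GLn n) : Matrix (Fin n) (Fin n) ℂ))
            * (G : Matrix (Fin n) (Fin n) ℂ) := by rw [← hXS]
      _ = c • (((G * V * G⁻¹ : GLn n) : Matrix (Fin n) (Fin n) ℂ)
            * (G : Matrix (Fin n) (Fin n) ℂ)) := by rw [Matrix.smul_mul]
      _ = c • ((G : Matrix (Fin n) (Fin n) ℂ) * (V : Matrix (Fin n) (Fin n) ℂ)) := by rw [hXG]
  obtain ⟨c, hc0, hcEq⟩ := scalar_rel S h1
  obtain ⟨e, he0, heEq⟩ := scalar_rel W h2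
  have hGd : (G : Matrix (Fin n) (Fin n) ℂ).det ≠ 0 :=
    ((isUnit_iff_isUnit_det _).mp G.isUnit).ne_zero
  have hSd : (S : Matrix (Fin n) (Fin n) ℂ).det ≠ 0 :=
    ((isUnit_iff_isUnit_det _).mp S.isUnit).ne_zero
  have hcn : c ^ n = 1 := by
    have hdet := congrArg Matrix.det hcEq
    rw [Matrix.det_mul, Matrix.det_smul, Matrix.det_mul, Fintype.card_fin] at hdet
    have h' : (1 : ℂ) * ((G : Matrix (Fin n) (Fin n) ℂ).det
        * (S : Matrix (Fin n) (Fin n) ℂ).det)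
        = c ^ n * ((G : Matrix (Fin n) (Fin n) ℂ).det
          * (S : Matrix (Fin n) (Fin n) ℂ).det) := by
      rw [one_mul, ← hdet, mul_comm]
    exact (mul_right_cancel₀ (mul_ne_zero hGd hSd) h').symm
  obtain ⟨k, hk, hkc⟩ := hζ.eq_pow_of_pow_eq_one
    (show (c⁻¹) ^ n = 1 by rw [inv_pow, hcn, inv_one])
  set H : Matrix (Fin n) (Fin n) ℂ
    := ((W ^ k : GLn n) : Matrix (Fin n) (Fin n) ℂ) * (G : Matrix (Fin n) (Fin n) ℂ) with hHdef
  have hHS : H * (S : Matrix (Fin n) (Fin n) ℂ) = (S : Matrix (Fin n) (Fin n) ℂ) * H := by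
    have hGS : (G : Matrix (Fin n) (Fin n) ℂ) * (S : Matrix (Fin n) (Fin n) ℂ)
        = c⁻¹ • ((S : Matrix (Fin n) (Fin n) ℂ) * (G : Matrix (Fin n) (Fin n) ℂ)) := by
      rw [hcEq, smul_smul, inv_mul_cancel₀ hc0, one_smul]
    have hWkS : ((W ^ k : GLn n) : Matrix (Fin n) (Fin n) ℂ) * (S : Matrix (Fin n) (Fin n) ℂ)
        = (ζ ^ k)⁻¹ • ((S : Matrix (Fin n) (Fin n) ℂ)
          * ((W ^ k : GLn n) : Matrix (Fin n) (Fin n) ℂ)) := by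
      rw [SW_comm hn hζ hS hW k, smul_smul, inv_mul_cancel₀ (pow_ne_zero _ hζ0), one_smul]
    calc H * (S : Matrix (Fin n) (Fin n) ℂ)
        = ((W ^ k : GLn n) : Matrix (Fin n) (Fin n) ℂ)
          * ((G : Matrix (Fin n) (Fin n) ℂ) * (S : Matrix (Fin n) (Fin n) ℂ)) := by
          rw [hHdef, Matrix.mul_assoc]
      _ = c⁻¹ • (((W ^ k : GLn n) : Matrix (Fin n) (Fin n) ℂ)
          * ((S : Matrix (Fin n) (Fin n) ℂ) * (G : Matrix (Fin n) (Fin n) ℂ))) := by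
          rw [hGS, Matrix.mul_smul]
      _ = c⁻¹ • ((((W ^ k : GLn n) : Matrix (Fin n) (Fin n) ℂ)
          * (S : Matrix (Fin n) (Fin n) ℂ)) * (G : Matrix (Fin n) (Fin n) ℂ)) := by
          rw [Matrix.mul_assoc]
      _ = (c⁻¹ * (ζ ^ k)⁻¹) • (((S : Matrix (Fin n) (Fin n) ℂ)
          * ((W ^ k : GLn n) : Matrix (Fin n) (Fin n) ℂ)) * (G : Matrix (Fin n) (Fin n) ℂ)) := by
          rw [hWkS, Matrix.smul_mul, smul_smul]
      _ = (S : Matrix (Fin n) (Fin n) ℂ) * H := by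
          rw [hkc, inv_inv, inv_mul_cancel₀ hc0, one_smul, hHdef, Matrix.mul_assoc]
  set dvec : Fin n → ℂ := fun i => H i i with hdvec
  have hHd : H = Matrix.diagonal dvec := by
    rw [hS] at hHS
    ext i j
    rcases eq_or_ne i j with rfl | hij
    · rw [Matrix.diagonal_apply_eq]
    · have hcomp := congrFun (congrFun hHS i) j
      rw [Matrix.mul_diagonal, Matrix.diagonal_mul] at hcomp
      rw [Matrix.diagonal_apply_ne _ hij]
      have hne : ζ ^ (j : ℕ) ≠ ζ ^ (i : ℕ) := by
        intro hEq
        exact hij (Fin.ext (hζ.pow_inj j.isLt i.isLt hEq)).symm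
      have hz : H i j * (ζ ^ (j : ℕ) - ζ ^ (i : ℕ)) = 0 := by linear_combination hcomp
      rcases mul_eq_zero.mp hz with h' | h'
      · exact h'
      · exact absurd (sub_eq_zero.mp h') hne
  have hHu : IsUnit H.det := by
    have hWG : H = ((W ^ k * G : GLn n) : Matrix (Fin n) (Fin n) ℂ) := by
      rw [Units.val_mul, hHdef]
    rw [hWG]
    exact (isUnit_iff_isUnit_det _).mp (W ^ k * G).isUnit
  have hd0 : ∀ i, dvec i ≠ 0 := by
    intro i hz
    rw [hHd, Matrix.det_diagonal] at hHu
    exact hHu.ne_zero (Finset.prod_eq_zero (Finset.mem_univ i) hz)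
  have hHW : H * (W : Matrix (Fin n) (Fin n) ℂ)
      = e⁻¹ • ((W : Matrix (Fin n) (Fin n) ℂ) * H) := by
    have hGW : (G : Matrix (Fin n) (Fin n) ℂ) * (W : Matrix (Fin n) (Fin n) ℂ)
        = e⁻¹ • ((W : Matrix (Fin n) (Fin n) ℂ) * (G : Matrix (Fin n) (Fin n) ℂ)) := by
      rw [heEq, smul_smul, inv_mul_cancel₀ he0, one_smul]
    have hWcomm : ((W ^ k : GLn n) : Matrix (Fin n) (Fin n) ℂ)
        * (W : Matrix (Fin n) (Fin n) ℂ)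
        = (W : Matrix (Fin n) (Fin n) ℂ) * ((W ^ k : GLn n) : Matrix (Fin n) (Fin n) ℂ) := by
      rw [← Units.val_mul, ← Units.val_mul, ← pow_succ, pow_succ']
    calc H * (W : Matrix (Fin n) (Fin n) ℂ)
        = ((W ^ k : GLn n) : Matrix (Fin n) (Fin n) ℂ)
          * ((G : Matrix (Fin n) (Fin n) ℂ) * (W : Matrix (Fin n) (Fin n) ℂ)) := by
          rw [hHdef, Matrix.mul_assoc]
      _ = e⁻¹ • ((((W ^ k : GLn n) : Matrix (Fin n) (Fin n) ℂ)
          * (W : Matrix (Fin n) (Fin n) ℂ)) * (G : Matrix (Fin n) (Fin n) ℂ)) := by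
          rw [hGW, Matrix.mul_smul, Matrix.mul_assoc]
      _ = e⁻¹ • ((W : Matrix (Fin n) (Fin n) ℂ) * H) := by
          rw [hWcomm, hHdef, Matrix.mul_assoc]
  have hrec : ∀ j : Fin n, dvec (j + 1) = e⁻¹ * dvec j := by
    intro j
    rw [hHd, W_apply hn hW] at hHW
    have hc2 := congrFun (congrFun hHW (j + 1)) j
    rw [Matrix.diagonal_mul, Matrix.smul_apply, Matrix.mul_diagonal] at hc2
    simpa using hc2
  have hiter : ∀ m : ℕ, dvec ((m : ℕ) : Fin n) = (e⁻¹) ^ m * dvec 0 := by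
    intro m
    induction m with
    | zero => simp
    | succ m ih =>
      have hcast : ((m + 1 : ℕ) : Fin n) = ((m : ℕ) : Fin n) + 1 := by push_cast; ring
      rw [hcast, hrec, ih, pow_succ]
      ring
  have hmun : (e⁻¹) ^ n = 1 := by
    have h0 := hiter n
    rw [Fin.natCast_self] at h0
    have h0' : (1 : ℂ) * dvec 0 = (e⁻¹) ^ n * dvec 0 := by rw [one_mul, ← h0]
    exact (mul_right_cancel₀ (hd0 0) h0').symm
  obtain ⟨m, hm, hmE⟩ := hζ.eq_pow_of_pow_eq_one hmun
  have hHSm : H = dvec 0 • ((S ^ m : GLn n) : Matrix (Fin n) (Fin n) ℂ) := by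
    rw [hHd, S_pow_apply hS]
    ext i j
    rcases eq_or_ne i j with rfl | hij
    · rw [Matrix.diagonal_apply_eq, Matrix.smul_apply, Matrix.diagonal_apply_eq, smul_eq_mul]
      have hit := hiter (i : ℕ)
      rw [Fin.cast_val_eq_self] at hit
      rw [hit, ← hmE, ← pow_mul]
      ring
    · rw [Matrix.diagonal_apply_ne _ hij, Matrix.smul_apply, Matrix.diagonal_apply_ne _ hij,
        smul_zero]
  have hmkeq : (QuotientGroup.mk (S ^ m) : GLn n ⧸ Subgroup.center (GLn n))
      = QuotientGroup.mk (W ^ k * G) := by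
    apply mk_eq_of_smul (dvec 0)
    rw [Units.val_mul]
    exact hHSm
  have hGexp : (QuotientGroup.mk G : GLn n ⧸ Subgroup.center (GLn n))
      = ((QuotientGroup.mk W : GLn n ⧸ Subgroup.center (GLn n)) ^ k)⁻¹
        * (QuotientGroup.mk S) ^ m := by
    rw [QuotientGroup.mk_mul, QuotientGroup.mk_pow] at hmkeq
    rw [QuotientGroup.mk_pow] at hmkeq
    rw [hmkeq]
    group
  rw [hGexp]
  exact mul_mem (inv_mem (pow_mem (Subgroup.subset_closure (by simp)) k))
    (pow_mem (Subgroup.subset_closure (by simp)) m)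

end Stmt2Aux

set_option maxHeartbeats 1000000 in
open Stmt2Aux in
/-- With `s̄, W̄` the images in `PGL(n,ℂ) = GL(n,ℂ)/center` of
`s = diag(1, ζ, …, ζ^{n−1})` and the cyclic permutation matrix `W` (`ζ` a primitive
`n`-th root of unity, `n ≥ 2`), the common centralizer of `s̄` and `W̄` in `PGL(n,ℂ)`
is exactly the subgroup generated by `s̄` and `W̄`; it is abelian of order `n²`. -/
theorem stmt_2 (n : ℕ) (hn : 2 ≤ n) (ζ : ℂ) (hζ : IsPrimitiveRoot ζ n)
    (S W : Matrix.GeneralLinearGroup (Fin n) ℂ)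
    (hS : (S : Matrix (Fin n) (Fin n) ℂ) = Matrix.diagonal fun i : Fin n => ζ ^ (i : ℕ))
    (hW : (W : Matrix (Fin n) (Fin n) ℂ) =
      Matrix.of fun i j : Fin n => if (i : ℕ) = ((j : ℕ) + 1) % n then (1 : ℂ) else 0) :
    let PGL := Matrix.GeneralLinearGroup (Fin n) ℂ ⧸
      Subgroup.center (Matrix.GeneralLinearGroup (Fin n) ℂ)
    let sbar : PGL := QuotientGroup.mk S
    let Wbar : PGL := QuotientGroup.mk W
    ({g : PGL | g * sbar * g⁻¹ = sbar ∧ g * Wbar * g⁻¹ = Wbar}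
        = (Subgroup.closure {sbar, Wbar} : Set PGL)) ∧
    Nat.card (Subgroup.closure {sbar, Wbar} : Subgroup PGL) = n ^ 2 ∧
    (∀ a ∈ Subgroup.closure {sbar, Wbar}, ∀ b ∈ Subgroup.closure {sbar, Wbar},
      a * b = b * a) := by
  intro PGL sbar Wbar
  haveI : NeZero n := ⟨by omega⟩
  have hsW : Commute sbar Wbar := bar_comm hn hζ hS hW
  have hsn : sbar ^ n = 1 := by
    show (QuotientGroup.mk S : PGL) ^ n = 1
    rw [← QuotientGroup.mk_pow, S_order hζ hS, QuotientGroup.mk_one]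
  have hwn : Wbar ^ n = 1 := by
    show (QuotientGroup.mk W : PGL) ^ n = 1
    rw [← QuotientGroup.mk_pow, W_order hn hW, QuotientGroup.mk_one]
  have hrep := rep_lemma hn hsW hsn hwn
  refine ⟨?_, ?_, ?_⟩
  · ext g
    simp only [Set.mem_setOf_eq, SetLike.mem_coe]
    constructor
    · rintro ⟨hg1, hg2⟩
      exact forward hn hζ hS hW g hg1 hg2
    · intro hg
      have hcen : g ∈ Subgroup.centralizer {sbar, Wbar} := by
        refine (Subgroup.closure_le (Subgroup.centralizer {sbar, Wbar})).mpr ?_ hg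
        intro z hz
        rw [SetLike.mem_coe, Subgroup.mem_centralizer_iff]
        intro h hh
        simp only [Set.mem_insert_iff, Set.mem_singleton_iff] at hz hh
        rcases hz with rfl | rfl <;> rcases hh with rfl | rfl
        exacts [rfl, hsW.eq.symm, hsW.eq, rfl]
      have h1 := Subgroup.mem_centralizer_iff.mp hcen sbar (Set.mem_insert _ _)
      have h2 := Subgroup.mem_centralizer_iff.mp hcen Wbar (Set.mem_insert_of_mem _ rfl)
      constructor
      · rw [← h1, mul_assoc, mul_inv_cancel, mul_one]
      · rw [← h2, mul_assoc, mul_inv_cancel, mul_one]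
  · refine card_lemma hn hsW hsn hwn ?_
    intro a b cc dd ha hb hcc hdd hEq'
    have hmk : (QuotientGroup.mk (S ^ a * W ^ b) : PGL)
        = QuotientGroup.mk (S ^ cc * W ^ dd) := by
      simpa [QuotientGroup.mk_mul, QuotientGroup.mk_pow] using hEq'
    exact inj_lemma hn hζ hS hW ha hb hcc hdd hmk
  · intro a ha b hb
    obtain ⟨a1, b1, _, _, rfl⟩ := hrep a ha
    obtain ⟨a2, b2, _, _, rfl⟩ := hrep b hb
    have c11 : Commute (sbar ^ a1) (sbar ^ a2) := (Commute.refl sbar).pow_pow _ _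
    have c12 : Commute (sbar ^ a1) (Wbar ^ b2) := hsW.pow_pow _ _
    have c21 : Commute (Wbar ^ b1) (sbar ^ a2) := hsW.symm.pow_pow _ _
    have c22 : Commute (Wbar ^ b1) (Wbar ^ b2) := (Commute.refl Wbar).pow_pow _ _
    exact (c11.mul_right c12).mul_left (c21.mul_right c22)
end

section
/- Let δ = diag(1,−1) ∈ O(2,ℂ). Suppose s, h ∈ O(2,ℂ) satisfy sh = hs and the common centralizer {g ∈ O(2,ℂ) : gs = sg and gh = hg} is finite. Then there exists g ∈ O(2,ℂ) with (g s g⁻¹, g h g⁻¹) equal to exactly one of the six pairs (I,δ), (−I,δ), (δ,I), (δ,−I), (δ,δ), (δ,−δ); moreover these six pairs lie in pairwise distinct orbits of the simultaneous conjugation action of O(2,ℂ) on pairs. -/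
open Matrix

noncomputable section Stmt5Aux

private abbrev O2c := Matrix.orthogonalGroup (Fin 2) ℂ
private abbrev Mat2c := Matrix (Fin 2) (Fin 2) ℂ

private def rotM (a b : ℂ) : Mat2c := !![a,b;-b,a]
private def reflM (a b : ℂ) : Mat2c := !![a,b;b,-a]
private def Dm : Mat2c := Matrix.diagonal ![1,-1]

section star
attribute [local instance] starRingOfComm

private lemma mem_O2 (A : Mat2c) (h : A * Aᵀ = 1) : A ∈ Matrix.orthogonalGroup (Fin 2) ℂ := by
  rw [Matrix.mem_orthogonalGroup_iff]
  simpa [Matrix.star_eq_conjTranspose, Matrix.conjTranspose] using h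

private lemma O2_mul_transpose (A : Mat2c) (h : A ∈ Matrix.orthogonalGroup (Fin 2) ℂ) :
    A * Aᵀ = 1 ∧ Aᵀ * A = 1 := by
  constructor
  · rw [Matrix.mem_orthogonalGroup_iff] at h
    simpa [Matrix.star_eq_conjTranspose, Matrix.conjTranspose] using h
  · rw [Matrix.mem_orthogonalGroup_iff'] at h
    simpa [Matrix.star_eq_conjTranspose, Matrix.conjTranspose] using h
end star

private lemma classify (A : Mat2c) (h1 : A * Aᵀ = 1) (h2 : Aᵀ * A = 1) :
    ∃ a b : ℂ, a^2 + b^2 = 1 ∧ (A = rotM a b ∨ A = reflM a b) := by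
  obtain ⟨a,b,c,d,hA⟩ : ∃ a b c d, A = !![a,b;c,d] := ⟨_,_,_,_, Matrix.eta_fin_two A⟩
  subst hA
  have e00 := congrFun (congrFun h1 0) 0
  have f00 := congrFun (congrFun h2 0) 0
  have f01 := congrFun (congrFun h2 0) 1
  have f11 := congrFun (congrFun h2 1) 1
  simp [Matrix.mul_apply, Fin.sum_univ_two, Matrix.transpose, Matrix.one_apply] at e00 f00 f01 f11
  rcases mul_eq_zero.mp (show (b - c) * (b + c) = 0 by linear_combination e00 - f00) with hb | hb
  · rcases mul_eq_zero.mp (show b * (a + d) = 0 by linear_combination f01 + d * hb) with h0 | h0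
    · have hc0 : c = 0 := by linear_combination -hb + h0
      rcases mul_eq_zero.mp (show (d - a) * (d + a) = 0 by linear_combination f11 - e00) with hd | hd
      · refine ⟨a, b, by linear_combination e00, Or.inl ?_⟩
        rw [rotM, show c = -b by linear_combination hc0 + h0,
          show d = a by linear_combination hd]
      · refine ⟨a, b, by linear_combination e00, Or.inr ?_⟩
        rw [reflM, show c = b by linear_combination -hb,
          show d = -a by linear_combination hd]
    · refine ⟨a, b, by linear_combination e00, Or.inr ?_⟩
      rw [reflM, show c = b by linear_combination -hb,
        show d = -a by linear_combination h0]
  · rcases mul_eq_zero.mp (show c * (d - a) = 0 by linear_combination f01 - a * hb) with h0 | h0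
    · have hb0 : b = 0 := by linear_combination hb - h0
      rcases mul_eq_zero.mp (show (d - a) * (d + a) = 0 by linear_combination f11 - e00) with hd | hd
      · refine ⟨a, b, by linear_combination e00, Or.inl ?_⟩
        rw [rotM, show c = -b by linear_combination hb,
          show d = a by linear_combination hd]
      · refine ⟨a, b, by linear_combination e00, Or.inr ?_⟩
        rw [reflM, show c = b by linear_combination h0 - hb0,
          show d = -a by linear_combination hd]
    · refine ⟨a, b, by linear_combination e00, Or.inl ?_⟩
      rw [rotM, show c = -b by linear_combination hb,
        show d = a by linear_combination h0]

private lemma rot_mem (a b : ℂ) (hab : a^2 + b^2 = 1) :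
    rotM a b ∈ Matrix.orthogonalGroup (Fin 2) ℂ := by
  apply mem_O2
  ext i j
  fin_cases i <;> fin_cases j <;>
    simp [rotM, Matrix.mul_apply, Fin.sum_univ_two, Matrix.transpose, Matrix.one_apply]
  all_goals first | ring1 | linear_combination hab | linear_combination -hab

private lemma rot_comm (a b e f : ℂ) : rotM e f * rotM a b = rotM a b * rotM e f := by
  ext i j
  fin_cases i <;> fin_cases j <;>
    simp [rotM, Matrix.mul_apply, Fin.sum_univ_two]
  all_goals ring1

/-- `rotM e f` conjugates `reflM a b` to `Dm`, in the form `G * R = D * G`. -/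
private lemma conj_refl (a b e f : ℂ) (h1 : e*a + f*b = e) (h2 : e*b - f*a = f) :
    rotM e f * reflM a b = Dm * rotM e f := by
  ext i j
  fin_cases i <;> fin_cases j <;>
    simp [rotM, reflM, Dm, Matrix.mul_apply, Fin.sum_univ_two, Matrix.diagonal]
  all_goals first | ring1 | linear_combination h1 | linear_combination -h1 |
    linear_combination h2 | linear_combination -h2

/-- Existence of the conjugating rotation for any reflection. -/
private lemma exists_conj_refl (a b : ℂ) (hab : a^2 + b^2 = 1) :
    ∃ e f : ℂ, e^2 + f^2 = 1 ∧ rotM e f * reflM a b = Dm * rotM e f := by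
  by_cases ha : 1 + a = 0
  · have hb : b = 0 := by
      have : b^2 = 0 := by linear_combination hab + (1 - a) * ha
      exact pow_eq_zero_iff (n := 2) (by norm_num) |>.mp this
    refine ⟨0, 1, by norm_num, conj_refl a b 0 1 ?_ ?_⟩
    · linear_combination hb
    · linear_combination -ha
  · obtain ⟨e, he⟩ := IsAlgClosed.exists_pow_nat_eq (k := ℂ) ((1+a)/2) (n := 2) (by norm_num)
    have he0 : e ≠ 0 := by
      intro h0
      rw [h0] at he
      simp at he
      exact ha (by linear_combination -2 * he)
    refine ⟨e, b/(2*e), ?_, conj_refl a b e _ ?_ ?_⟩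
    · field_simp
      linear_combination (4*e^2 + 2*a - 2) * he + hab
    · field_simp
      linear_combination (2*a - 2) * he + hab
    · field_simp
      linear_combination 2 * b * he

private lemma trace_conj (g q : O2c) :
    ((g * q * g⁻¹ : O2c) : Mat2c).trace = ((q : O2c) : Mat2c).trace := by
  have hinv : ((g⁻¹ : O2c) : Mat2c) * (g : Mat2c) = 1 := by
    have h1 : (g⁻¹ * g : O2c) = 1 := inv_mul_cancel g
    calc ((g⁻¹ : O2c) : Mat2c) * (g : Mat2c) = ((g⁻¹ * g : O2c) : Mat2c) := rfl
      _ = 1 := by rw [h1]; rfl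
  have hcoe : ((g * q * g⁻¹ : O2c) : Mat2c)
      = (g : Mat2c) * (q : Mat2c) * ((g⁻¹ : O2c) : Mat2c) := rfl
  rw [hcoe, Matrix.trace_mul_comm, ← mul_assoc, hinv, one_mul]

/-- invariant triple of traces -/
private def Tinv (p : O2c × O2c) : ℂ × ℂ × ℂ :=
  ((p.1 : Mat2c).trace, (p.2 : Mat2c).trace, ((p.1 : Mat2c) * (p.2 : Mat2c)).trace)

private lemma Tinv_conj (g : O2c) (p : O2c × O2c) :
    Tinv (g * p.1 * g⁻¹, g * p.2 * g⁻¹) = Tinv p := by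
  obtain ⟨p1, p2⟩ := p
  have h3 : (g * p1 * g⁻¹) * (g * p2 * g⁻¹) = g * (p1 * p2) * g⁻¹ := by group
  have h3' : ((g * p1 * g⁻¹ : O2c) : Mat2c) * ((g * p2 * g⁻¹ : O2c) : Mat2c)
      = ((g * (p1 * p2) * g⁻¹ : O2c) : Mat2c) := by
    rw [← h3]; rfl
  refine Prod.ext (trace_conj g p1) (Prod.ext (trace_conj g p2) ?_)
  simp only [Tinv, h3']
  have := trace_conj g (p1 * p2)
  simpa using this

private lemma Dm_trace : Dm.trace = 0 := by
  simp [Dm, Matrix.trace_diagonal, Fin.sum_univ_two]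

private lemma Dm_mul_Dm : Dm * Dm = 1 := by
  ext i j
  fin_cases i <;> fin_cases j <;>
    simp [Dm, Matrix.mul_apply, Fin.sum_univ_two, Matrix.diagonal, Matrix.one_apply]

private lemma rotM_one : rotM 1 0 = (1 : Mat2c) := by
  ext i j
  fin_cases i <;> fin_cases j <;> simp [rotM, Matrix.one_apply]

private lemma rotM_negone : rotM (-1) 0 = (-1 : Mat2c) := by
  ext i j
  fin_cases i <;> fin_cases j <;> simp [rotM, Matrix.one_apply]

private lemma reflM_neg (a b : ℂ) : reflM (-a) (-b) = -reflM a b := by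
  ext i j
  fin_cases i <;> fin_cases j <;> simp [reflM]

end Stmt5Aux

/-- In `O(2,ℂ)` with `δ = diag(1,−1)` (and `−I`, `−δ` the indicated
elements), every commuting pair `(s,h)` with finite common centralizer is simultaneously
conjugate to exactly one of the six pairs `(I,δ), (−I,δ), (δ,I), (δ,−I), (δ,δ), (δ,−δ)`,
and these six pairs lie in pairwise distinct simultaneous-conjugation orbits. -/
theorem stmt_5 (δ negI negδ : Matrix.orthogonalGroup (Fin 2) ℂ)
    (hδ : (δ : Matrix (Fin 2) (Fin 2) ℂ) = Matrix.diagonal ![1, -1])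
    (hnegI : (negI : Matrix (Fin 2) (Fin 2) ℂ) = -1)
    (hnegδ : (negδ : Matrix (Fin 2) (Fin 2) ℂ) = -(δ : Matrix (Fin 2) (Fin 2) ℂ))
    (s h : Matrix.orthogonalGroup (Fin 2) ℂ)
    (hcomm : s * h = h * s)
    (hfin : {g : Matrix.orthogonalGroup (Fin 2) ℂ |
      g * s = s * g ∧ g * h = h * g}.Finite) :
    let L : List (Matrix.orthogonalGroup (Fin 2) ℂ × Matrix.orthogonalGroup (Fin 2) ℂ) :=
      [(1, δ), (negI, δ), (δ, 1), (δ, negI), (δ, δ), (δ, negδ)]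
    (∃! p : Matrix.orthogonalGroup (Fin 2) ℂ × Matrix.orthogonalGroup (Fin 2) ℂ,
      p ∈ L ∧ ∃ g : Matrix.orthogonalGroup (Fin 2) ℂ,
        (g * s * g⁻¹, g * h * g⁻¹) = p) ∧
    (∀ p ∈ L, ∀ q ∈ L,
      (∃ g : Matrix.orthogonalGroup (Fin 2) ℂ, (g * p.1 * g⁻¹, g * p.2 * g⁻¹) = q) →
      p = q) := by
  intro L
  have hδ' : (δ : Mat2c) = Dm := hδ
  have hnegδ' : (negδ : Mat2c) = -Dm := by rw [hnegδ, hδ']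
  -- the key pairwise-distinctness statement
  have key : ∀ p ∈ L, ∀ q ∈ L,
      (∃ g : O2c, (g * p.1 * g⁻¹, g * p.2 * g⁻¹) = q) → p = q := by
    intro p hp q hq ⟨g, hg⟩
    have hT : Tinv q = Tinv p := by rw [← hg]; exact Tinv_conj g p
    have hL : L = [(1, δ), (negI, δ), (δ, 1), (δ, negI), (δ, δ), (δ, negδ)] := rfl
    rw [hL] at hp hq
    simp only [List.mem_cons, List.not_mem_nil, or_false] at hp hq
    rcases hp with rfl|rfl|rfl|rfl|rfl|rfl <;> rcases hq with rfl|rfl|rfl|rfl|rfl|rfl <;>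
      first
      | rfl
      | (exfalso
         simp only [Tinv, hδ', hnegδ', hnegI, OneMemClass.coe_one, Prod.mk.injEq,
           one_mul, mul_one, neg_mul, mul_neg, neg_neg, Dm_mul_Dm, Matrix.trace_neg,
           Dm_trace, Matrix.trace_one] at hT
         norm_num at hT)
  refine ⟨?_, key⟩
  -- existence
  have hsT := O2_mul_transpose _ s.2
  have hhT := O2_mul_transpose _ h.2
  obtain ⟨a, b, hab, hS⟩ := classify _ hsT.1 hsT.2
  obtain ⟨c, d, hcd, hH⟩ := classify _ hhT.1 hhT.2
  have hcomm' : (s : Mat2c) * (h : Mat2c) = (h : Mat2c) * (s : Mat2c) := by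
    have := congrArg (Subtype.val) hcomm
    simpa using this
  -- helper to conclude
  have build : ∀ p ∈ L, (∃ g : O2c, (g * s * g⁻¹, g * h * g⁻¹) = p) →
      ∃! p' : O2c × O2c, p' ∈ L ∧ ∃ g : O2c, (g * s * g⁻¹, g * h * g⁻¹) = p' := by
    intro p hp hex
    refine ⟨p, ⟨hp, hex⟩, ?_⟩
    rintro q ⟨hq, g2, hg2⟩
    obtain ⟨g1, hg1⟩ := hex
    refine key q hq p hp ⟨g1 * g2⁻¹, ?_⟩
    have h1 : q.1 = g2 * s * g2⁻¹ := by rw [← hg2]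
    have h2 : q.2 = g2 * h * g2⁻¹ := by rw [← hg2]
    have p1 : p.1 = g1 * s * g1⁻¹ := by rw [← hg1]
    have p2 : p.2 = g1 * h * g1⁻¹ := by rw [← hg1]
    refine Prod.ext ?_ ?_ <;> simp only [h1, h2, p1, p2] <;> group
  -- helper: conjugation via matrix-level witness
  have conj_eq : ∀ g x y : O2c, (g : Mat2c) * (x : Mat2c) = (y : Mat2c) * (g : Mat2c) →
      g * x * g⁻¹ = y := by
    intro g x y hxy
    rw [mul_inv_eq_iff_eq_mul]
    exact Subtype.ext hxy
  have hL : L = [(1, δ), (negI, δ), (δ, 1), (δ, negI), (δ, δ), (δ, negδ)] := rfl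
  rcases hS with hS | hS <;> rcases hH with hH | hH
  · -- both rotations: infinite centralizer, contradiction
    exfalso
    have hinf : {g : O2c | g * s = s * g ∧ g * h = h * g}.Infinite := by
      have hx : ∀ n : ℕ, ∃ x : ℂ, x ^ 2 = 1 - (n:ℂ)^2 := fun n =>
        IsAlgClosed.exists_pow_nat_eq (k := ℂ) _ (n := 2) (by norm_num)
      choose x hx using hx
      apply Set.infinite_of_injective_forall_mem
        (f := fun n : ℕ => (⟨rotM (x n) n, rot_mem _ _ (by rw [hx n]; ring)⟩ : O2c))
      · intro m n hmn
        have h2 := congrArg (fun z : O2c => (z : Mat2c) 0 1) hmn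
        simp only [rotM] at h2
        have h3 : (m : ℂ) = n := by simpa using h2
        exact_mod_cast h3
      · intro n
        constructor
        · refine Subtype.ext ?_
          show rotM (x n) n * (s : Mat2c) = (s : Mat2c) * rotM (x n) n
          rw [hS]; exact rot_comm _ _ _ _
        · refine Subtype.ext ?_
          show rotM (x n) n * (h : Mat2c) = (h : Mat2c) * rotM (x n) n
          rw [hH]; exact rot_comm _ _ _ _
    exact absurd hinf hfin.not_infinite
  · -- s rotation, h reflection: s = ±1
    rw [hS, hH] at hcomm'
    have e00 := congrFun (congrFun hcomm' 0) 0
    have e01 := congrFun (congrFun hcomm' 0) 1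
    simp [rotM, reflM, Matrix.mul_apply, Fin.sum_univ_two] at e00 e01
    have hbd : b * d = 0 := by linear_combination e00 / 2
    have hbc : b * c = 0 := by linear_combination -e01 / 2
    have hb : b = 0 := by
      by_contra hb0
      have hc0 : c = 0 := by
        rcases mul_eq_zero.mp hbc with h' | h'
        · exact absurd h' hb0
        · exact h'
      have hd0 : d = 0 := by
        rcases mul_eq_zero.mp hbd with h' | h'
        · exact absurd h' hb0
        · exact h'
      rw [hc0, hd0] at hcd
      norm_num at hcd
    obtain ⟨e, f, hef, hconj⟩ := exists_conj_refl c d hcd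
    set g : O2c := ⟨rotM e f, rot_mem _ _ hef⟩ with hg
    have hgh : g * h * g⁻¹ = δ := by
      apply conj_eq
      show rotM e f * (h : Mat2c) = (δ : Mat2c) * rotM e f
      rw [hH, hδ']
      exact hconj
    rcases mul_eq_zero.mp (show (a-1)*(a+1) = 0 by linear_combination hab - b * hb) with ha | ha
    · have hs1 : s = 1 := by
        refine Subtype.ext ?_
        show (s : Mat2c) = ((1 : O2c) : Mat2c)
        rw [hS, show a = 1 by linear_combination ha, hb, OneMemClass.coe_one, rotM_one]
      apply build (1, δ) (by rw [hL]; simp)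
      refine ⟨g, ?_⟩
      rw [Prod.mk.injEq]
      refine ⟨?_, hgh⟩
      rw [hs1]
      group
    · have hs1 : s = negI := by
        refine Subtype.ext ?_
        rw [hS, show a = -1 by linear_combination ha, hb, hnegI, rotM_negone]
      apply build (negI, δ) (by rw [hL]; simp)
      refine ⟨g, ?_⟩
      rw [Prod.mk.injEq]
      refine ⟨?_, hgh⟩
      rw [hs1]
      apply conj_eq
      rw [hnegI]
      simp
  · -- s reflection, h rotation: h = ±1
    rw [hS, hH] at hcomm'
    have e00 := congrFun (congrFun hcomm' 0) 0
    have e01 := congrFun (congrFun hcomm' 0) 1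
    simp [rotM, reflM, Matrix.mul_apply, Fin.sum_univ_two] at e00 e01
    have hdb : d * b = 0 := by linear_combination -e00 / 2
    have hda : d * a = 0 := by linear_combination e01 / 2
    have hd : d = 0 := by
      by_contra hd0
      have ha0 : a = 0 := by
        rcases mul_eq_zero.mp hda with h' | h'
        · exact absurd h' hd0
        · exact h'
      have hb0 : b = 0 := by
        rcases mul_eq_zero.mp hdb with h' | h'
        · exact absurd h' hd0
        · exact h'
      rw [ha0, hb0] at hab
      norm_num at hab
    obtain ⟨e, f, hef, hconj⟩ := exists_conj_refl a b hab
    set g : O2c := ⟨rotM e f, rot_mem _ _ hef⟩ with hg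
    have hgs : g * s * g⁻¹ = δ := by
      apply conj_eq
      show rotM e f * (s : Mat2c) = (δ : Mat2c) * rotM e f
      rw [hS, hδ']
      exact hconj
    rcases mul_eq_zero.mp (show (c-1)*(c+1) = 0 by linear_combination hcd - d * hd) with hc | hc
    · have hh1 : h = 1 := by
        refine Subtype.ext ?_
        show (h : Mat2c) = ((1 : O2c) : Mat2c)
        rw [hH, show c = 1 by linear_combination hc, hd, OneMemClass.coe_one, rotM_one]
      apply build (δ, 1) (by rw [hL]; simp)
      refine ⟨g, ?_⟩
      rw [Prod.mk.injEq]
      refine ⟨hgs, ?_⟩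
      rw [hh1]
      group
    · have hh1 : h = negI := by
        refine Subtype.ext ?_
        rw [hH, show c = -1 by linear_combination hc, hd, hnegI, rotM_negone]
      apply build (δ, negI) (by rw [hL]; simp)
      refine ⟨g, ?_⟩
      rw [Prod.mk.injEq]
      refine ⟨hgs, ?_⟩
      rw [hh1]
      apply conj_eq
      rw [hnegI]
      simp
  · -- both reflections: h = ±s
    rw [hS, hH] at hcomm'
    have e01 := congrFun (congrFun hcomm' 0) 1
    simp [reflM, Matrix.mul_apply, Fin.sum_univ_two] at e01
    have had : a * d - b * c = 0 := by linear_combination e01 / 2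
    set k : ℂ := a * c + b * d with hk
    have hc : c - a * k = 0 := by rw [hk]; linear_combination (-c) * hab - b * had
    have hd : d - b * k = 0 := by rw [hk]; linear_combination (-d) * hab + a * had
    have hk2 : (k - 1) * (k + 1) = 0 := by
      linear_combination hcd - (c + a*k) * hc - (d + b*k) * hd - k^2 * hab
    obtain ⟨e, f, hef, hconj⟩ := exists_conj_refl a b hab
    set g : O2c := ⟨rotM e f, rot_mem _ _ hef⟩ with hg
    have hgs : g * s * g⁻¹ = δ := by
      apply conj_eq
      show rotM e f * (s : Mat2c) = (δ : Mat2c) * rotM e f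
      rw [hS, hδ']
      exact hconj
    rcases mul_eq_zero.mp hk2 with hk1 | hk1
    · -- k = 1 : h = s
      have hhs : (h : Mat2c) = (s : Mat2c) := by
        rw [hS, hH, show c = a by linear_combination hc + a * hk1,
          show d = b by linear_combination hd + b * hk1]
      apply build (δ, δ) (by rw [hL]; simp)
      refine ⟨g, ?_⟩
      rw [Prod.mk.injEq]
      refine ⟨hgs, ?_⟩
      apply conj_eq
      show rotM e f * (h : Mat2c) = (δ : Mat2c) * rotM e f
      rw [hhs, hS, hδ']
      exact hconj
    · -- k = -1 : h = -s
      apply build (δ, negδ) (by rw [hL]; simp)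
      refine ⟨g, ?_⟩
      rw [Prod.mk.injEq]
      refine ⟨hgs, ?_⟩
      apply conj_eq
      show rotM e f * (h : Mat2c) = (negδ : Mat2c) * rotM e f
      rw [hH, show c = -a by linear_combination hc + a * hk1,
        show d = -b by linear_combination hd + b * hk1, hnegδ', reflM_neg,
        mul_neg, hconj, neg_mul]
end

section
/- Let N ⊆ SL(2,ℂ) be the subgroup of matrices that are either diagonal or antidiagonal, and let w = [[0,1],[−1,0]]. Suppose s, h ∈ N satisfy sh = hs and the common centralizer {g ∈ N : gs = sg and gh = hg} is finite. Then (s,h) is conjugate in N (by simultaneous conjugation) to exactly one of the six pairs (I,w), (−I,w), (w,I), (w,−I), (w,w), (w,−w), and these six pairs lie in pairwise distinct simultaneous-conjugation orbits of N. -/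
/-- A matrix in `SL(2,ℂ)` is diagonal or antidiagonal. -/
def diagOrAntidiag (A : Matrix.SpecialLinearGroup (Fin 2) ℂ) : Prop :=
  ((A : Matrix (Fin 2) (Fin 2) ℂ) 0 1 = 0 ∧ (A : Matrix (Fin 2) (Fin 2) ℂ) 1 0 = 0) ∨
  ((A : Matrix (Fin 2) (Fin 2) ℂ) 0 0 = 0 ∧ (A : Matrix (Fin 2) (Fin 2) ℂ) 1 1 = 0)

namespace Stmt7Aux
open Matrix

abbrev SL2' := Matrix.SpecialLinearGroup (Fin 2) ℂ
abbrev M2' := Matrix (Fin 2) (Fin 2) ℂ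

lemma sl2_ext {A B : SL2'} (h : (A : M2') = (B : M2')) : A = B := Subtype.ext h

/-- diagonal element of SL2 -/
def gd (c x : ℂ) (h : c * (c * x) = 1) : SL2' :=
  ⟨!![c, 0; 0, c * x], by rw [Matrix.det_fin_two_of]; linear_combination h⟩

lemma gd_coe (c x : ℂ) (h : c * (c * x) = 1) : ((gd c x h : SL2') : M2') = !![c, 0; 0, c * x] := rfl

lemma gd_diag (c x : ℂ) (h : c * (c * x) = 1) : diagOrAntidiag (gd c x h) := by
  left
  constructor <;> simp [gd]

lemma w2coe (w : SL2') (hw : (w : M2') = !![0,1;-1,0]) :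
    ((w ^ 2 : SL2') : M2') = !![-1,0;0,-1] := by
  rw [pow_two, Matrix.SpecialLinearGroup.coe_mul, hw, Matrix.mul_fin_two]
  norm_num

lemma w3coe (w : SL2') (hw : (w : M2') = !![0,1;-1,0]) :
    ((w ^ 3 : SL2') : M2') = !![0,-1;1,0] := by
  rw [pow_succ, Matrix.SpecialLinearGroup.coe_mul, w2coe w hw, hw, Matrix.mul_fin_two]
  norm_num

lemma cen_w2 (w : SL2') (hw : (w : M2') = !![0,1;-1,0]) (x : SL2') :
    x * w ^ 2 = w ^ 2 * x := by
  apply sl2_ext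
  rw [Matrix.SpecialLinearGroup.coe_mul, Matrix.SpecialLinearGroup.coe_mul, w2coe w hw,
    Matrix.eta_fin_two (x : M2'), Matrix.mul_fin_two, Matrix.mul_fin_two]
  ext i j
  fin_cases i <;> fin_cases j <;> simp <;> ring

lemma cen_one (x : SL2') : x * 1 = 1 * x := by rw [mul_one, one_mul]

lemma conj_central_left {g a b : SL2'} (ha : ∀ x : SL2', x * a = a * x)
    (h : g * a * g⁻¹ = b) : a = b := by
  rw [← h, ha g, mul_inv_cancel_right]

lemma conj_central_right {g a b : SL2'} (hb : ∀ x : SL2', x * b = b * x)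
    (h : g * a * g⁻¹ = b) : a = b := by
  have h2 : a = g⁻¹ * b * g := by rw [← h]; group
  rw [h2, hb g⁻¹, inv_mul_cancel_right]

lemma conj_pow' {g a b : SL2'} (h : g * a * g⁻¹ = b) (n : ℕ) :
    g * a ^ n * g⁻¹ = b ^ n := by
  rw [← h, conj_pow]

lemma conj_anti (g A T : SL2') (c x b b' t t' : ℂ)
    (hg : (g : M2') = !![c, 0; 0, x]) (hA : (A : M2') = !![0, b; b', 0])
    (hT : (T : M2') = !![0, t; t', 0])
    (e1 : c * b = t * x) (e2 : x * b' = t' * c) :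
    g * A * g⁻¹ = T := by
  rw [mul_inv_eq_iff_eq_mul]
  apply sl2_ext
  rw [Matrix.SpecialLinearGroup.coe_mul, Matrix.SpecialLinearGroup.coe_mul, hg, hA, hT,
    Matrix.mul_fin_two, Matrix.mul_fin_two]
  ext i j
  fin_cases i <;> fin_cases j <;> simp <;>
    first
      | linear_combination e1
      | linear_combination e2

lemma comm_entries {s h : SL2'} (hc : s * h = h * s) (i j : Fin 2) :
    (s : M2') i 0 * (h : M2') 0 j + (s : M2') i 1 * (h : M2') 1 j =
      (h : M2') i 0 * (s : M2') 0 j + (h : M2') i 1 * (s : M2') 1 j := by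
  have hcM : (s : M2') * (h : M2') = (h : M2') * (s : M2') := by
    simpa using congrArg (fun x : SL2' => (x : M2')) hc
  have := congrFun (congrFun hcM i) j
  simpa [Matrix.mul_apply, Fin.sum_univ_two] using this

lemma det_eq (A : SL2') : (A : M2') 0 0 * (A : M2') 1 1 - (A : M2') 0 1 * (A : M2') 1 0 = 1 := by
  have := A.2
  rwa [Matrix.det_fin_two] at this

lemma anti_coe (A : SL2') (h1 : (A : M2') 0 0 = 0) (h2 : (A : M2') 1 1 = 0) :
    (A : M2') = !![0, (A : M2') 0 1; (A : M2') 1 0, 0] :=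
  (Matrix.eta_fin_two _).trans (by rw [h1, h2])

lemma diag_coe (A : SL2') (h1 : (A : M2') 0 1 = 0) (h2 : (A : M2') 1 0 = 0) :
    (A : M2') = !![(A : M2') 0 0, 0; 0, (A : M2') 1 1] :=
  (Matrix.eta_fin_two _).trans (by rw [h1, h2])

lemma mkne {A B : SL2'} {a b c d e f a' b' : ℂ}
    (hA : (A : M2') = !![a, b; c, d]) (hB : (B : M2') = !![e, f; a', b'])
    (hne : a ≠ e ∨ b ≠ f) : A ≠ B := by
  intro heq
  rw [heq, hB] at hA
  have h00 := congrFun (congrFun hA 0) 0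
  have h01 := congrFun (congrFun hA 0) 1
  simp at h00 h01
  rcases hne with hne | hne
  · exact hne h00.symm
  · exact hne h01.symm

lemma one_coe : ((1 : SL2') : M2') = !![1, 0; 0, 1] := by
  rw [Matrix.SpecialLinearGroup.coe_one, Matrix.one_fin_two]

lemma diag_comm (g s : SL2') (hg1 : (g : M2') 0 1 = 0) (hg2 : (g : M2') 1 0 = 0)
    (hs1 : (s : M2') 0 1 = 0) (hs2 : (s : M2') 1 0 = 0) : g * s = s * g := by
  apply sl2_ext
  rw [Matrix.SpecialLinearGroup.coe_mul, Matrix.SpecialLinearGroup.coe_mul,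
    diag_coe g hg1 hg2, diag_coe s hs1 hs2, Matrix.mul_fin_two, Matrix.mul_fin_two]
  ext i j
  fin_cases i <;> fin_cases j <;> simp <;> ring

end Stmt7Aux

set_option maxHeartbeats 1000000 in
open Stmt7Aux in
/-- In the subgroup `N ⊆ SL(2,ℂ)` of diagonal-or-antidiagonal matrices,
every commuting pair `(s,h)` of elements of `N` with finite common centralizer in `N`
is simultaneously `N`-conjugate to exactly one of the six pairs
`(I,w), (−I,w), (w,I), (w,−I), (w,w), (w,−w)` (here `−I = w²`, `−w = w³`), and these six
pairs lie in pairwise distinct simultaneous-conjugation `N`-orbits. -/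
theorem stmt_7 (w : Matrix.SpecialLinearGroup (Fin 2) ℂ)
    (hw : (w : Matrix (Fin 2) (Fin 2) ℂ) = !![0, 1; -1, 0])
    (s h : Matrix.SpecialLinearGroup (Fin 2) ℂ)
    (hs : diagOrAntidiag s) (hh : diagOrAntidiag h)
    (hcomm : s * h = h * s)
    (hfin : {g : Matrix.SpecialLinearGroup (Fin 2) ℂ |
      diagOrAntidiag g ∧ g * s = s * g ∧ g * h = h * g}.Finite) :
    let L : List (Matrix.SpecialLinearGroup (Fin 2) ℂ × Matrix.SpecialLinearGroup (Fin 2) ℂ) :=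
      [(1, w), (w ^ 2, w), (w, 1), (w, w ^ 2), (w, w), (w, w ^ 3)]
    (∃! p : Matrix.SpecialLinearGroup (Fin 2) ℂ × Matrix.SpecialLinearGroup (Fin 2) ℂ,
      p ∈ L ∧ ∃ g : Matrix.SpecialLinearGroup (Fin 2) ℂ, diagOrAntidiag g ∧
        (g * s * g⁻¹, g * h * g⁻¹) = p) ∧
    (∀ p ∈ L, ∀ q ∈ L,
      (∃ g : Matrix.SpecialLinearGroup (Fin 2) ℂ, diagOrAntidiag g ∧
        (g * p.1 * g⁻¹, g * p.2 * g⁻¹) = q) →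
      p = q) := by
  intro L
  have hLdef : L = [(1, w), (w ^ 2, w), (w, 1), (w, w ^ 2), (w, w), (w, w ^ 3)] := rfl
  have hW2 := w2coe w hw
  have hW3 := w3coe w hw
  have cenW2 := cen_w2 w hw
  have n1w : (1 : SL2') ≠ w := mkne one_coe hw (by norm_num)
  have n1w2 : (1 : SL2') ≠ w ^ 2 := mkne one_coe hW2 (by norm_num)
  have n1w3 : (1 : SL2') ≠ w ^ 3 := mkne one_coe hW3 (by norm_num)
  have nww2 : w ≠ w ^ 2 := mkne hw hW2 (by norm_num)
  have nww3 : w ≠ w ^ 3 := mkne hw hW3 (by norm_num)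
  have nw2w3 : w ^ 2 ≠ w ^ 3 := mkne hW2 hW3 (by norm_num)
  have nw1 := n1w.symm
  have nw21 := n1w2.symm
  have nw31 := n1w3.symm
  have nw2w := nww2.symm
  have nw3w := nww3.symm
  have nw3w2 := nw2w3.symm
  -- the key separation lemma
  have key : ∀ p ∈ L, ∀ q ∈ L,
      (∃ g : SL2', (g * p.1 * g⁻¹, g * p.2 * g⁻¹) = q) → p = q := by
    rw [hLdef]
    intro p hp q hq hex
    obtain ⟨g, hg⟩ := hex
    simp only [List.mem_cons, List.mem_singleton, List.not_mem_nil, or_false] at hp hq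
    rcases hp with rfl | rfl | rfl | rfl | rfl | rfl <;>
        rcases hq with rfl | rfl | rfl | rfl | rfl | rfl <;>
        simp only [Prod.mk.injEq] at hg <;>
        obtain ⟨h1, h2⟩ := hg
    · rfl
    · exact absurd (conj_central_left cen_one h1) n1w2
    · exact absurd (conj_central_left cen_one h1) n1w
    · exact absurd (conj_central_left cen_one h1) n1w
    · exact absurd (conj_central_left cen_one h1) n1w
    · exact absurd (conj_central_left cen_one h1) n1w
    · exact absurd (conj_central_left cenW2 h1) nw21
    · rfl
    · exact absurd (conj_central_left cenW2 h1) nw2w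
    · exact absurd (conj_central_left cenW2 h1) nw2w
    · exact absurd (conj_central_left cenW2 h1) nw2w
    · exact absurd (conj_central_left cenW2 h1) nw2w
    · exact absurd (conj_central_left cen_one h2) n1w
    · exact absurd (conj_central_left cen_one h2) n1w
    · rfl
    · exact absurd (conj_central_left cen_one h2) n1w2
    · exact absurd (conj_central_left cen_one h2) n1w
    · exact absurd (conj_central_left cen_one h2) n1w3
    · exact absurd (conj_central_left cenW2 h2) nw2w
    · exact absurd (conj_central_left cenW2 h2) nw2w
    · exact absurd (conj_central_left cenW2 h2) nw21
    · rfl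
    · exact absurd (conj_central_left cenW2 h2) nw2w
    · exact absurd (conj_central_left cenW2 h2) nw2w3
    · exact absurd (conj_central_right cen_one h1) nw1
    · exact absurd (conj_central_right cenW2 h1) nww2
    · exact absurd (conj_central_right cen_one h2) nw1
    · exact absurd (conj_central_right cenW2 h2) nww2
    · rfl
    · exact absurd (h1.symm.trans h2) nww3
    · exact absurd (conj_central_right cen_one h1) nw1
    · exact absurd (conj_central_right cenW2 h1) nww2
    · exact absurd (conj_central_right cen_one h2) nw31
    · exact absurd (conj_central_right cenW2 h2) nw3w2
    · exact absurd ((conj_pow' h1 3).symm.trans h2) nw3w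
    · rfl
  -- existence
  have hexist : ∃ p ∈ L, ∃ g : SL2', diagOrAntidiag g ∧ (g * s * g⁻¹, g * h * g⁻¹) = p := by
    rcases hs with ⟨hs1, hs2⟩ | ⟨hs1, hs2⟩ <;> rcases hh with ⟨hh1, hh2⟩ | ⟨hh1, hh2⟩
    · -- both diagonal: contradiction with finiteness
      exfalso
      have det1 : ∀ u : ℂˣ, (!![(u : ℂ), 0; 0, ((u⁻¹ : ℂˣ) : ℂ)] : M2').det = 1 := by
        intro u
        rw [Matrix.det_fin_two_of]
        simp
      haveI : Infinite ℂˣ := Infinite.of_injective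
          (fun n : ℕ => Units.mk0 (((n + 1 : ℕ) : ℂ))
            (Nat.cast_ne_zero.mpr (Nat.succ_ne_zero n)))
          (by
            intro a b hab
            have h' := congrArg (fun u : ℂˣ => (u : ℂ)) hab
            simp only [Units.val_mk0] at h'
            exact Nat.succ_injective (Nat.cast_injective h'))
      have hinj : Function.Injective
          (fun u : ℂˣ => (⟨_, det1 u⟩ : SL2')) := by
        intro a b hab
        have h00 := congrArg (fun g : SL2' => (g : M2') 0 0) hab
        simp at h00
        exact Units.ext h00
      have hmem : ∀ u : ℂˣ,
          (⟨_, det1 u⟩ : SL2') ∈ {g : SL2' | diagOrAntidiag g ∧ g * s = s * g ∧ g * h = h * g} := by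
        intro u
        have hg1 : ((⟨_, det1 u⟩ : SL2') : M2') 0 1 = 0 := by simp
        have hg2 : ((⟨_, det1 u⟩ : SL2') : M2') 1 0 = 0 := by simp
        exact ⟨Or.inl ⟨hg1, hg2⟩, diag_comm _ s hg1 hg2 hs1 hs2, diag_comm _ h hg1 hg2 hh1 hh2⟩
      exact Set.infinite_of_injective_forall_mem hinj hmem hfin
    · -- s diagonal, h antidiagonal
      have ds := det_eq s
      rw [hs1, hs2] at ds
      have dh := det_eq h
      rw [hh1, hh2] at dh
      have dh' : (h : M2') 0 1 * (h : M2') 1 0 = -1 := by linear_combination -dh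
      have h01ne : (h : M2') 0 1 ≠ 0 := by
        intro h0
        rw [h0] at dh'
        norm_num at dh'
      have hco := comm_entries hcomm 0 1
      rw [hs1, hh1, hh2] at hco
      have hss : (s : M2') 0 0 = (s : M2') 1 1 := by
        have hz : ((s : M2') 0 0 - (s : M2') 1 1) * (h : M2') 0 1 = 0 := by
          linear_combination hco
        rcases mul_eq_zero.mp hz with hz' | hz'
        · exact sub_eq_zero.mp hz'
        · exact absurd hz' h01ne
      have hs00 : (s : M2') 0 0 * (s : M2') 0 0 = 1 := by
        rw [← hss] at ds
        linear_combination ds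
      obtain ⟨c, hc⟩ := IsAlgClosed.exists_pow_nat_eq ((h : M2') 0 1)⁻¹ (n := 2) (by norm_num)
      have hcc : c * (c * (h : M2') 0 1) = 1 := by
        have : c ^ 2 * (h : M2') 0 1 = 1 := by
          rw [hc]
          exact inv_mul_cancel₀ h01ne
        linear_combination this
      have hgw : gd c _ hcc * h * (gd c _ hcc)⁻¹ = w :=
        conj_anti _ h w c (c * (h : M2') 0 1) ((h : M2') 0 1) ((h : M2') 1 0) 1 (-1)
          (gd_coe _ _ _) (anti_coe h hh1 hh2) hw (by ring) (by linear_combination c * dh')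
      rcases mul_self_eq_one_iff.mp hs00 with h1 | h1
      · have hseq : s = 1 := sl2_ext (by
          rw [diag_coe s hs1 hs2, h1, hss.symm.trans h1]
          simp [Matrix.one_fin_two])
        refine ⟨(1, w), by simp [hLdef], gd c _ hcc, gd_diag _ _ _, ?_⟩
        rw [hseq, hgw, mul_one, mul_inv_cancel]
      · have hseq : s = w ^ 2 := sl2_ext (by
          rw [diag_coe s hs1 hs2, h1, hss.symm.trans h1, hW2])
        refine ⟨(w ^ 2, w), by simp [hLdef], gd c _ hcc, gd_diag _ _ _, ?_⟩
        rw [hseq, hgw, cenW2, mul_inv_cancel_right]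
    · -- s antidiagonal, h diagonal
      have ds := det_eq s
      rw [hs1, hs2] at ds
      have dh := det_eq h
      rw [hh1, hh2] at dh
      have ds' : (s : M2') 0 1 * (s : M2') 1 0 = -1 := by linear_combination -ds
      have s01ne : (s : M2') 0 1 ≠ 0 := by
        intro h0
        rw [h0] at ds'
        norm_num at ds'
      have hco := comm_entries hcomm 0 1
      rw [hs1, hs2, hh1] at hco
      have hss : (h : M2') 0 0 = (h : M2') 1 1 := by
        have hz : ((h : M2') 0 0 - (h : M2') 1 1) * (s : M2') 0 1 = 0 := by
          linear_combination -hco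
        rcases mul_eq_zero.mp hz with hz' | hz'
        · exact sub_eq_zero.mp hz'
        · exact absurd hz' s01ne
      have hh00 : (h : M2') 0 0 * (h : M2') 0 0 = 1 := by
        rw [← hss] at dh
        linear_combination dh
      obtain ⟨c, hc⟩ := IsAlgClosed.exists_pow_nat_eq ((s : M2') 0 1)⁻¹ (n := 2) (by norm_num)
      have hcc : c * (c * (s : M2') 0 1) = 1 := by
        have : c ^ 2 * (s : M2') 0 1 = 1 := by
          rw [hc]
          exact inv_mul_cancel₀ s01ne
        linear_combination this
      have hgw : gd c _ hcc * s * (gd c _ hcc)⁻¹ = w :=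
        conj_anti _ s w c (c * (s : M2') 0 1) ((s : M2') 0 1) ((s : M2') 1 0) 1 (-1)
          (gd_coe _ _ _) (anti_coe s hs1 hs2) hw (by ring) (by linear_combination c * ds')
      rcases mul_self_eq_one_iff.mp hh00 with h1 | h1
      · have hheq : h = 1 := sl2_ext (by
          rw [diag_coe h hh1 hh2, h1, hss.symm.trans h1]
          simp [Matrix.one_fin_two])
        refine ⟨(w, 1), by simp [hLdef], gd c _ hcc, gd_diag _ _ _, ?_⟩
        rw [hheq, hgw, mul_one, mul_inv_cancel]
      · have hheq : h = w ^ 2 := sl2_ext (by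
          rw [diag_coe h hh1 hh2, h1, hss.symm.trans h1, hW2])
        refine ⟨(w, w ^ 2), by simp [hLdef], gd c _ hcc, gd_diag _ _ _, ?_⟩
        rw [hheq, hgw, cenW2, mul_inv_cancel_right]
    · -- both antidiagonal
      have ds := det_eq s
      rw [hs1, hs2] at ds
      have dh := det_eq h
      rw [hh1, hh2] at dh
      have ds' : (s : M2') 0 1 * (s : M2') 1 0 = -1 := by linear_combination -ds
      have dh' : (h : M2') 0 1 * (h : M2') 1 0 = -1 := by linear_combination -dh
      have s01ne : (s : M2') 0 1 ≠ 0 := by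
        intro h0
        rw [h0] at ds'
        norm_num at ds'
      have h01ne : (h : M2') 0 1 ≠ 0 := by
        intro h0
        rw [h0] at dh'
        norm_num at dh'
      have hco := comm_entries hcomm 0 0
      rw [hs1, hh1] at hco
      -- hco : s01 * h10 = h01 * s10
      have hsq : ((h : M2') 0 1 - (s : M2') 0 1) * ((h : M2') 0 1 + (s : M2') 0 1) = 0 := by
        linear_combination ((s : M2') 0 1 * (h : M2') 0 1) * hco
          + ((h : M2') 0 1 * (h : M2') 0 1) * ds' + (-((s : M2') 0 1 * (s : M2') 0 1)) * dh'
      obtain ⟨c, hc⟩ := IsAlgClosed.exists_pow_nat_eq ((s : M2') 0 1)⁻¹ (n := 2) (by norm_num)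
      have hcc : c * (c * (s : M2') 0 1) = 1 := by
        have : c ^ 2 * (s : M2') 0 1 = 1 := by
          rw [hc]
          exact inv_mul_cancel₀ s01ne
        linear_combination this
      have hgw : gd c _ hcc * s * (gd c _ hcc)⁻¹ = w :=
        conj_anti _ s w c (c * (s : M2') 0 1) ((s : M2') 0 1) ((s : M2') 1 0) 1 (-1)
          (gd_coe _ _ _) (anti_coe s hs1 hs2) hw (by ring) (by linear_combination c * ds')
      rcases mul_eq_zero.mp hsq with hcase | hcase
      · -- h01 = s01 : pair (w, w)
        have hcase' : (h : M2') 0 1 = (s : M2') 0 1 := sub_eq_zero.mp hcase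
        have hgh : gd c _ hcc * h * (gd c _ hcc)⁻¹ = w :=
          conj_anti _ h w c (c * (s : M2') 0 1) ((h : M2') 0 1) ((h : M2') 1 0) 1 (-1)
            (gd_coe _ _ _) (anti_coe h hh1 hh2) hw
            (by rw [hcase']; ring)
            (by
              have hh10 : (h : M2') 1 0 = (s : M2') 1 0 := by
                have := dh'
                rw [hcase'] at this
                exact mul_left_cancel₀ s01ne (this.trans ds'.symm)
              rw [hh10]
              linear_combination c * ds')
        exact ⟨(w, w), by simp [hLdef], gd c _ hcc, gd_diag _ _ _, by rw [hgw, hgh]⟩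
      · -- h01 = -s01 : pair (w, w³)
        have hcase' : (h : M2') 0 1 = -(s : M2') 0 1 := by
          have := add_eq_zero_iff_eq_neg.mp hcase
          exact this
        have hgh : gd c _ hcc * h * (gd c _ hcc)⁻¹ = w ^ 3 :=
          conj_anti _ h (w ^ 3) c (c * (s : M2') 0 1) ((h : M2') 0 1) ((h : M2') 1 0) (-1) 1
            (gd_coe _ _ _) (anti_coe h hh1 hh2) hW3
            (by rw [hcase']; ring)
            (by
              have hh10 : (h : M2') 1 0 = -(s : M2') 1 0 := by
                have h2 := dh'
                rw [hcase'] at h2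
                have : (s : M2') 0 1 * -((h : M2') 1 0) = -1 := by linear_combination h2
                have h3 := mul_left_cancel₀ s01ne (this.trans ds'.symm)
                linear_combination -h3
              rw [hh10]
              linear_combination -c * ds')
        exact ⟨(w, w ^ 3), by simp [hLdef], gd c _ hcc, gd_diag _ _ _, by rw [hgw, hgh]⟩
  -- assemble
  obtain ⟨p, hpL, g, hgN, hge⟩ := hexist
  rw [Prod.ext_iff] at hge
  obtain ⟨hge1, hge2⟩ := hge
  constructor
  · refine ⟨p, ⟨hpL, g, hgN, Prod.ext hge1 hge2⟩, ?_⟩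
    rintro q ⟨hqL, g', _, hg'e⟩
    rw [Prod.ext_iff] at hg'e
    obtain ⟨hq1, hq2⟩ := hg'e
    refine key q hqL p hpL ⟨g * g'⁻¹, Prod.ext ?_ ?_⟩
    · show (g * g'⁻¹) * q.1 * (g * g'⁻¹)⁻¹ = p.1
      rw [← hq1, ← hge1]
      group
    · show (g * g'⁻¹) * q.2 * (g * g'⁻¹)⁻¹ = p.2
      rw [← hq2, ← hge2]
      group
  · rintro p' hp' q' hq' ⟨g'', _, hg''⟩
    exact key p' hp' q' hq' ⟨g'', hg''⟩
end

section
/- Let s = diag(i,−i) and w = [[0,1],[−1,0]] in SL(2,ℂ). Then the set {A ∈ SL(2,ℂ) : A s A⁻¹ ∈ {s, −s} and A w A⁻¹ ∈ {w, −w}} is exactly the eight-element subgroup {I, −I, s, −s, w, −w, sw, −sw}, which is isomorphic to the quaternion group of order 8. -/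
section QuatAux
variable {H : Type*} [Group H]

/-- Build the Q8 hom from generators satisfying the relations. -/
lemma stmt8_exists_hom (s w : H) (hs4 : s^4 = 1) (hw2 : w^2 = s^2) (hsw : s*w = w*s^3) :
    ∃ φ : QuaternionGroup 2 →* H,
      (∀ i : ZMod 4, φ (.a i) = s ^ i.val) ∧ (∀ i : ZMod 4, φ (.xa i) = w * s ^ i.val) := by
  have hpow : ∀ m : ℕ, s ^ m = s ^ (m % 4) := fun m => by
    conv_lhs => rw [← Nat.div_add_mod m 4, pow_add, pow_mul, hs4, one_pow, one_mul]
  have hkey : ∀ (m : ℕ) (x : ZMod 4), ((m : ZMod 4) = x) → s ^ m = s ^ x.val := by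
    intro m x h
    rw [hpow m, ← h, ZMod.val_natCast]
  have hcomm : ∀ k : ℕ, s ^ k * w = w * s ^ (3 * k) := by
    intro k; induction k with
    | zero => simp
    | succ k ih =>
      have h3 : 3 * (k+1) = 3 + 3 * k := by ring
      rw [h3, pow_succ', mul_assoc, ih, ← mul_assoc, hsw, mul_assoc, ← pow_add]
  refine ⟨{ toFun := fun g => match g with
            | .a i => s ^ i.val
            | .xa i => w * s ^ i.val,
            map_one' := ?_, map_mul' := ?_ }, fun i => rfl, fun i => rfl⟩
  · show s ^ (0 : ZMod 4).val = 1
    simp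
  · rintro (i | j) (i' | j')
    · show s ^ (i + i').val = s ^ i.val * s ^ i'.val
      rw [← pow_add]
      refine (hkey _ _ ?_).symm
      push_cast [ZMod.natCast_val, ZMod.cast_id]
      ring
    · show w * s ^ (j' - i).val = s ^ i.val * (w * s ^ j'.val)
      rw [← mul_assoc, hcomm, mul_assoc, ← pow_add]
      congr 1
      refine (hkey _ _ ?_).symm
      push_cast [ZMod.natCast_val, ZMod.cast_id]
      have : ∀ a b : ZMod 4, 3*a + b = b - a := by decide
      exact this _ _
    · show w * s ^ (j + i').val = (w * s ^ j.val) * s ^ i'.val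
      rw [mul_assoc, ← pow_add]
      congr 1
      refine (hkey _ _ ?_).symm
      push_cast [ZMod.natCast_val, ZMod.cast_id]
      ring
    · show s ^ (((2:ℕ) : ZMod 4) + j' - j).val = (w * s ^ j.val) * (w * s ^ j'.val)
      have step : (w * s ^ j.val) * (w * s ^ j'.val) = w * ((s ^ j.val * w) * s ^ j'.val) := by
        group
      rw [step, hcomm, show w * ((w * s ^ (3 * j.val)) * s ^ j'.val)
          = (w * w) * (s ^ (3 * j.val) * s ^ j'.val) by group,
        show w * w = s ^ 2 from by rw [← pow_two]; exact hw2, ← pow_add, ← pow_add]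
      refine (hkey _ _ ?_).symm
      push_cast [ZMod.natCast_val, ZMod.cast_id]
      have : ∀ a b : ZMod 4, 2 + (3*a + b) = 2 + b - a := by decide
      exact this _ _

lemma stmt8_inj (s w : H) (hs4 : s^4 = 1) (hs2 : s^2 ≠ 1) (hws : ∀ k : ℕ, w * s ^ k ≠ 1)
    (φ : QuaternionGroup 2 →* H) (ha : ∀ i : ZMod 4, φ (.a i) = s ^ i.val)
    (hxa : ∀ i : ZMod 4, φ (.xa i) = w * s ^ i.val) : Function.Injective φ := by
  rw [injective_iff_map_eq_one]
  rintro (i | i) hg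
  · rw [ha] at hg
    have hlt : i.val < 4 := i.val_lt
    have h0 : i = 0 := by
      by_contra hne
      have hv : i.val ≠ 0 := fun h => hne (ZMod.val_eq_zero i |>.mp h)
      have : i.val = 1 ∨ i.val = 2 ∨ i.val = 3 := by omega
      rcases this with h|h|h
      · rw [h, pow_one] at hg; exact hs2 (by rw [hg, one_pow])
      · rw [h] at hg; exact hs2 hg
      · rw [h] at hg
        have hs1 : s = 1 := by
          have h4 : s ^ 4 = s ^ 3 * s := by rw [pow_succ]
          rw [hs4, hg, one_mul] at h4; exact h4.symm
        exact hs2 (by rw [hs1, one_pow])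
    rw [QuaternionGroup.one_def, h0]
  · rw [hxa] at hg; exact absurd hg (hws _)

end QuatAux

local notation "SL2" => Matrix.SpecialLinearGroup (Fin 2) ℂ
local notation "Mx" => Matrix (Fin 2) (Fin 2) ℂ

/-- For `s = diag(i,−i)` and `w = [[0,1],[−1,0]]` in `SL(2,ℂ)`, the set
`{A ∈ SL(2,ℂ) : AsA⁻¹ ∈ {s,−s} and AwA⁻¹ ∈ {w,−w}}` is exactly the eight-element subgroup
`{±I, ±s, ±w, ±sw}` (the subgroup generated by `s` and `w`), which is isomorphic to the
quaternion group of order 8. -/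
theorem stmt_8 (s w : Matrix.SpecialLinearGroup (Fin 2) ℂ)
    (hs : (s : Matrix (Fin 2) (Fin 2) ℂ) = !![Complex.I, 0; 0, -Complex.I])
    (hw : (w : Matrix (Fin 2) (Fin 2) ℂ) = !![0, 1; -1, 0]) :
    let E : Set (Matrix.SpecialLinearGroup (Fin 2) ℂ) :=
      {A | ((A * s * A⁻¹ : Matrix.SpecialLinearGroup (Fin 2) ℂ) : Matrix (Fin 2) (Fin 2) ℂ)
              ∈ ({(s : Matrix (Fin 2) (Fin 2) ℂ), -(s : Matrix (Fin 2) (Fin 2) ℂ)} :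
                Set (Matrix (Fin 2) (Fin 2) ℂ)) ∧
           ((A * w * A⁻¹ : Matrix.SpecialLinearGroup (Fin 2) ℂ) : Matrix (Fin 2) (Fin 2) ℂ)
              ∈ ({(w : Matrix (Fin 2) (Fin 2) ℂ), -(w : Matrix (Fin 2) (Fin 2) ℂ)} :
                Set (Matrix (Fin 2) (Fin 2) ℂ))}
    (E = {A : Matrix.SpecialLinearGroup (Fin 2) ℂ |
        (A : Matrix (Fin 2) (Fin 2) ℂ) ∈
          ({1, -1, (s : Matrix (Fin 2) (Fin 2) ℂ), -(s : Matrix (Fin 2) (Fin 2) ℂ),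
            (w : Matrix (Fin 2) (Fin 2) ℂ), -(w : Matrix (Fin 2) (Fin 2) ℂ),
            (s : Matrix (Fin 2) (Fin 2) ℂ) * (w : Matrix (Fin 2) (Fin 2) ℂ),
            -((s : Matrix (Fin 2) (Fin 2) ℂ) * (w : Matrix (Fin 2) (Fin 2) ℂ))} :
            Set (Matrix (Fin 2) (Fin 2) ℂ))}) ∧
    (E = (Subgroup.closure {s, w} : Set (Matrix.SpecialLinearGroup (Fin 2) ℂ))) ∧
    Nat.card (Subgroup.closure ({s, w} : Set (Matrix.SpecialLinearGroup (Fin 2) ℂ))) = 8 ∧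
    Nonempty ((Subgroup.closure ({s, w} : Set (Matrix.SpecialLinearGroup (Fin 2) ℂ)))
      ≃* QuaternionGroup 2) := by
  intro E
  -- conjugation criterion
  have conj_iff : ∀ (A B : SL2) (M : Mx),
      ((A * B * A⁻¹ : SL2) : Mx) = M ↔
        (A : Mx) * B = M * A := by
    intro A B M
    have h1 : (A : Mx) * (A⁻¹ : SL2) = 1 := by
      rw [← Matrix.SpecialLinearGroup.coe_mul, mul_inv_cancel]
      exact Matrix.SpecialLinearGroup.coe_one
    have h2 : ((A⁻¹ : SL2) : Mx) * A = 1 := by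
      rw [← Matrix.SpecialLinearGroup.coe_mul, inv_mul_cancel]
      exact Matrix.SpecialLinearGroup.coe_one
    constructor
    · intro h
      rw [Matrix.SpecialLinearGroup.coe_mul, Matrix.SpecialLinearGroup.coe_mul] at h
      calc (A : Mx) * B
          = ((A : Mx) * B) *
              (((A⁻¹ : SL2) : Mx) * A) := by rw [h2, mul_one]
        _ = ((A : Mx) * B * (A⁻¹ : SL2)) * A := by rw [← mul_assoc]
        _ = M * A := by rw [h]
    · intro h
      rw [Matrix.SpecialLinearGroup.coe_mul, Matrix.SpecialLinearGroup.coe_mul, h, mul_assoc, h1,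
        mul_one]
  have hEmem : ∀ A : SL2, A ∈ E ↔
      (((A : Mx) * s = (s : Mx) * A ∨
        (A : Mx) * s = -((s : Matrix (Fin 2) (Fin 2) ℂ) * A)) ∧
       ((A : Mx) * w = (w : Mx) * A ∨
        (A : Mx) * w = -((w : Matrix (Fin 2) (Fin 2) ℂ) * A))) := by
    intro A
    have hinE : A ∈ E ↔ (((A * s * A⁻¹ : SL2) : Mx) ∈ ({(s : Mx), -(s : Mx)} : Set Mx) ∧
        ((A * w * A⁻¹ : SL2) : Mx) ∈ ({(w : Mx), -(w : Mx)} : Set Mx)) := Iff.rfl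
    rw [hinE]
    simp only [Set.mem_insert_iff, Set.mem_singleton_iff, conj_iff, neg_mul]
  -- basic matrix facts
  have c2 : ((s * s : SL2) : Mx) = -1 := by
    rw [Matrix.SpecialLinearGroup.coe_mul, hs]
    rw [← Matrix.ext_iff]
    norm_num [Matrix.mul_fin_two, Fin.forall_fin_two, Matrix.one_apply, Matrix.neg_apply,
      Complex.ext_iff]
  have cww : ((w * w : SL2) : Mx) = -1 := by
    rw [Matrix.SpecialLinearGroup.coe_mul, hw]
    rw [← Matrix.ext_iff]
    norm_num [Matrix.mul_fin_two, Fin.forall_fin_two, Matrix.one_apply, Matrix.neg_apply]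
  have hs4 : s ^ 4 = 1 := by
    have h4 : s * s * (s * s) = 1 := by
      apply Subtype.ext
      rw [Matrix.SpecialLinearGroup.coe_mul, c2, Matrix.SpecialLinearGroup.coe_one]
      norm_num
    rw [show (4:ℕ) = 2*2 from rfl, pow_mul, pow_two, pow_two]; exact h4
  have hw2 : w ^ 2 = s ^ 2 := by
    apply Subtype.ext
    rw [pow_two, pow_two, cww, c2]
  have hsw : s * w = w * s ^ 3 := by
    apply Subtype.ext
    rw [pow_succ, pow_two]
    simp only [Matrix.SpecialLinearGroup.coe_mul]
    rw [hs, hw]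
    rw [← Matrix.ext_iff]
    norm_num [Matrix.mul_fin_two, Fin.forall_fin_two, Matrix.neg_apply, Matrix.one_apply]
  have hs2ne : s ^ 2 ≠ 1 := by
    intro h
    have e := congrArg (fun M : SL2 => (M : Mx) 0 0) h
    simp only [pow_two, Matrix.SpecialLinearGroup.coe_mul, Matrix.SpecialLinearGroup.coe_one,
      c2] at e
    norm_num [Matrix.neg_apply, Matrix.one_apply] at e
  have hpow : ∀ m : ℕ, s ^ m = s ^ (m % 4) := fun m => by
    conv_lhs => rw [← Nat.div_add_mod m 4, pow_add, pow_mul, hs4, one_pow, one_mul]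
  -- coe values of s powers
  have v0 : ((s ^ 0 : SL2) : Mx) = 1 := by
    rw [pow_zero, Matrix.SpecialLinearGroup.coe_one]
  have v1 : ((s ^ 1 : SL2) : Mx) = (s : Mx) := by
    rw [pow_one]
  have v2 : ((s ^ 2 : SL2) : Mx) = -1 := by rw [pow_two]; exact c2
  have v3 : ((s ^ 3 : SL2) : Mx) = -(s : Mx) := by
    rw [pow_succ, pow_two, Matrix.SpecialLinearGroup.coe_mul, c2, neg_one_mul]
  have w0 : ((w * s ^ 0 : SL2) : Mx) = (w : Mx) := by
    rw [pow_zero, mul_one]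
  have w1 : ((w * s ^ 1 : SL2) : Mx) =
      -((s : Mx) * (w : Mx)) := by
    rw [pow_one, Matrix.SpecialLinearGroup.coe_mul, hs, hw, ← Matrix.ext_iff]
    norm_num [Matrix.mul_fin_two, Fin.forall_fin_two, Matrix.neg_apply]
  have w2 : ((w * s ^ 2 : SL2) : Mx) = -(w : Mx) := by
    rw [Matrix.SpecialLinearGroup.coe_mul, v2, mul_neg, mul_one]
  have w3 : ((w * s ^ 3 : SL2) : Mx) =
      (s : Mx) * (w : Mx) := by
    rw [Matrix.SpecialLinearGroup.coe_mul, v3, hs, hw, ← Matrix.ext_iff]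
    norm_num [Matrix.mul_fin_two, Fin.forall_fin_two, Matrix.neg_apply]
  have hws : ∀ k : ℕ, w * s ^ k ≠ 1 := by
    intro k h
    rw [hpow] at h
    have hlt : k % 4 < 4 := Nat.mod_lt _ (by norm_num)
    have e := congrArg (fun M : SL2 => (M : Mx) 0 0) h
    simp only [Matrix.SpecialLinearGroup.coe_one] at e
    have : k % 4 = 0 ∨ k % 4 = 1 ∨ k % 4 = 2 ∨ k % 4 = 3 := by omega
    rcases this with h'|h'|h'|h' <;> rw [h'] at e
    · rw [w0, hw] at e; norm_num [Matrix.one_apply] at e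
    · rw [w1, hs, hw] at e
      norm_num [Matrix.mul_fin_two, Matrix.neg_apply, Matrix.one_apply] at e
    · rw [w2, hw] at e; norm_num [Matrix.neg_apply, Matrix.one_apply] at e
    · rw [w3, hs, hw] at e
      norm_num [Matrix.mul_fin_two, Matrix.one_apply] at e
  -- Part A
  have partA : E = {A : SL2 |
      (A : Mx) ∈
        ({1, -1, (s : Matrix (Fin 2) (Fin 2) ℂ), -(s : Matrix (Fin 2) (Fin 2) ℂ),
          (w : Matrix (Fin 2) (Fin 2) ℂ), -(w : Matrix (Fin 2) (Fin 2) ℂ),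
          (s : Matrix (Fin 2) (Fin 2) ℂ) * (w : Matrix (Fin 2) (Fin 2) ℂ),
          -((s : Matrix (Fin 2) (Fin 2) ℂ) * (w : Matrix (Fin 2) (Fin 2) ℂ))} :
          Set (Matrix (Fin 2) (Fin 2) ℂ))} := by
    ext A
    rw [hEmem A]
    simp only [Set.mem_setOf_eq, Set.mem_insert_iff, Set.mem_singleton_iff]
    obtain ⟨a, b, c, d, hA⟩ : ∃ a b c d, (A : Mx) = !![a, b; c, d] :=
      ⟨_, _, _, _, (Matrix.eta_fin_two (A : Mx))⟩
    have hdet : a * d - b * c = 1 := by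
      have h := Matrix.SpecialLinearGroup.det_coe A
      rw [hA, Matrix.det_fin_two_of] at h
      exact h
    rw [hA, hs, hw]
    constructor
    · rintro ⟨hS | hS, hW | hW⟩ <;>
        rw [← Matrix.ext_iff] at hS hW <;>
        simp only [Matrix.mul_fin_two, Fin.forall_fin_two, Matrix.cons_val', Matrix.cons_val_zero,
          Matrix.cons_val_one, Matrix.head_cons, Matrix.head_fin_const, Matrix.empty_val',
          Matrix.cons_val_fin_one, Matrix.of_apply, Matrix.neg_apply, mul_zero, zero_mul, add_zero,
          zero_add, neg_zero, neg_neg] at hS hW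
      · -- A commutes with both: A = ±1
        obtain ⟨⟨h1, h2⟩, h3, h4⟩ := hS
        have hb : b = 0 := by linear_combination (Complex.I/2) * h2 + b * Complex.I_sq
        have hc : c = 0 := by linear_combination (-Complex.I/2) * h3 + c * Complex.I_sq
        obtain ⟨⟨h5, h6⟩, h7, h8⟩ := hW
        have had : a = d := by linear_combination h6
        have ha2 : a * a = 1 := by linear_combination hdet + a * had + c * hb
        rcases mul_self_eq_one_iff.mp ha2 with h | h
        · have hd : d = 1 := by linear_combination h - had
          left; rw [hb, hc, h, hd, ← Matrix.ext_iff]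
          norm_num [Fin.forall_fin_two, Matrix.one_apply]
        · have hd : d = -1 := by linear_combination h - had
          right; left; rw [hb, hc, h, hd, ← Matrix.ext_iff]
          norm_num [Fin.forall_fin_two, Matrix.one_apply, Matrix.neg_apply]
      · -- A commutes with s, anticommutes with w: A = ±s
        obtain ⟨⟨h1, h2⟩, h3, h4⟩ := hS
        have hb : b = 0 := by linear_combination (Complex.I/2) * h2 + b * Complex.I_sq
        have hc : c = 0 := by linear_combination (-Complex.I/2) * h3 + c * Complex.I_sq
        obtain ⟨⟨h5, h6⟩, h7, h8⟩ := hW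
        have had : a = -d := by linear_combination h6
        have ha2 : a * a = -1 := by linear_combination -hdet + a * had - c * hb
        have hfac : (a - Complex.I) * (a + Complex.I) = 0 := by
          linear_combination ha2 - Complex.I_sq
        rcases mul_eq_zero.mp hfac with h | h
        · have ha : a = Complex.I := by linear_combination h
          have hd : d = -Complex.I := by linear_combination had - ha
          right; right; left; rw [hb, hc, ha, hd]
        · have ha : a = -Complex.I := by linear_combination h
          have hd : d = Complex.I := by linear_combination had - ha
          right; right; right; left; rw [hb, hc, ha, hd, ← Matrix.ext_iff]
          norm_num [Fin.forall_fin_two, Matrix.neg_apply]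
      · -- A anticommutes with s, commutes with w: A = ±w
        obtain ⟨⟨h1, h2⟩, h3, h4⟩ := hS
        have ha : a = 0 := by linear_combination (-Complex.I/2) * h1 + a * Complex.I_sq
        have hd : d = 0 := by linear_combination (Complex.I/2) * h4 + d * Complex.I_sq
        obtain ⟨⟨h5, h6⟩, h7, h8⟩ := hW
        have hcb : c = -b := by linear_combination h8
        have hb2 : b * b = 1 := by linear_combination hdet + b * hcb - a * hd
        rcases mul_self_eq_one_iff.mp hb2 with h | h
        · have hc : c = -1 := by linear_combination hcb - h
          right; right; right; right; left; rw [ha, hd, h, hc]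
        · have hc : c = 1 := by linear_combination hcb - h
          right; right; right; right; right; left; rw [ha, hd, h, hc, ← Matrix.ext_iff]
          norm_num [Fin.forall_fin_two, Matrix.neg_apply]
      · -- A anticommutes with both: A = ±sw
        obtain ⟨⟨h1, h2⟩, h3, h4⟩ := hS
        have ha : a = 0 := by linear_combination (-Complex.I/2) * h1 + a * Complex.I_sq
        have hd : d = 0 := by linear_combination (Complex.I/2) * h4 + d * Complex.I_sq
        obtain ⟨⟨h5, h6⟩, h7, h8⟩ := hW
        have hcb : c = b := by linear_combination h8
        have hb2 : b * b = -1 := by linear_combination -hdet - b * hcb + a * hd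
        have hfac : (b - Complex.I) * (b + Complex.I) = 0 := by
          linear_combination hb2 - Complex.I_sq
        rcases mul_eq_zero.mp hfac with h | h
        · have hb : b = Complex.I := by linear_combination h
          have hc : c = Complex.I := by linear_combination hcb + hb
          right; right; right; right; right; right; left
          rw [ha, hd, hb, hc, ← Matrix.ext_iff]
          norm_num [Fin.forall_fin_two, Matrix.mul_fin_two]
        · have hb : b = -Complex.I := by linear_combination h
          have hc : c = -Complex.I := by linear_combination hcb + hb
          right; right; right; right; right; right; right
          rw [ha, hd, hb, hc, ← Matrix.ext_iff]
          norm_num [Fin.forall_fin_two, Matrix.mul_fin_two, Matrix.neg_apply]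
    · rintro (h|h|h|h|h|h|h|h) <;> rw [h] <;> refine ⟨?_, ?_⟩ <;>
        first
          | (left; rw [← Matrix.ext_iff];
             norm_num [Fin.forall_fin_two, Matrix.mul_fin_two, Matrix.one_apply, Matrix.neg_apply,
               Matrix.mul_apply, Fin.sum_univ_two, Complex.ext_iff]; done)
          | (right; rw [← Matrix.ext_iff];
             norm_num [Fin.forall_fin_two, Matrix.mul_fin_two, Matrix.one_apply, Matrix.neg_apply,
               Matrix.mul_apply, Fin.sum_univ_two, Complex.ext_iff]; done)
  -- the homomorphism from Q8
  obtain ⟨φ, hφa, hφxa⟩ := stmt8_exists_hom s w hs4 hw2 hsw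
  have hinj := stmt8_inj s w hs4 hs2ne hws φ hφa hφxa
  have hrange : φ.range = Subgroup.closure ({s, w} : Set SL2) := by
    apply le_antisymm
    · rintro x ⟨g, rfl⟩
      have hsmem : s ∈ Subgroup.closure ({s, w} : Set SL2) := Subgroup.subset_closure (by simp)
      have hwmem : w ∈ Subgroup.closure ({s, w} : Set SL2) := Subgroup.subset_closure (by simp)
      cases g with
      | a i => rw [hφa]; exact pow_mem hsmem _
      | xa i => rw [hφxa]; exact mul_mem hwmem (pow_mem hsmem _)
    · rw [Subgroup.closure_le]
      rintro x hx
      simp only [Set.mem_insert_iff, Set.mem_singleton_iff] at hx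
      rcases hx with rfl | rfl
      · exact ⟨.a (1 : ZMod 4), by rw [hφa, show ((1 : ZMod 4)).val = 1 from rfl, pow_one]⟩
      · exact ⟨.xa (0 : ZMod 4), by
          rw [hφxa, show ((0 : ZMod 4)).val = 0 from rfl, pow_zero, mul_one]⟩
  have partB : E = (Subgroup.closure ({s, w} : Set SL2) : Set SL2) := by
    rw [partA]
    ext A
    simp only [Set.mem_setOf_eq, SetLike.mem_coe, ← hrange, MonoidHom.mem_range]
    constructor
    · intro h
      simp only [Set.mem_insert_iff, Set.mem_singleton_iff] at h
      rcases h with h|h|h|h|h|h|h|h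
      · exact ⟨.a (0 : ZMod 4), Subtype.ext (by
          rw [hφa, show ((0 : ZMod 4)).val = 0 from rfl, v0, h])⟩
      · exact ⟨.a (2 : ZMod 4), Subtype.ext (by
          rw [hφa, show ((2 : ZMod 4)).val = 2 from rfl, v2, h])⟩
      · exact ⟨.a (1 : ZMod 4), Subtype.ext (by
          rw [hφa, show ((1 : ZMod 4)).val = 1 from rfl, v1, h])⟩
      · exact ⟨.a (3 : ZMod 4), Subtype.ext (by
          rw [hφa, show ((3 : ZMod 4)).val = 3 from rfl, v3, h])⟩
      · exact ⟨.xa (0 : ZMod 4), Subtype.ext (by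
          rw [hφxa, show ((0 : ZMod 4)).val = 0 from rfl, w0, h])⟩
      · exact ⟨.xa (2 : ZMod 4), Subtype.ext (by
          rw [hφxa, show ((2 : ZMod 4)).val = 2 from rfl, w2, h])⟩
      · exact ⟨.xa (3 : ZMod 4), Subtype.ext (by
          rw [hφxa, show ((3 : ZMod 4)).val = 3 from rfl, w3, h])⟩
      · exact ⟨.xa (1 : ZMod 4), Subtype.ext (by
          rw [hφxa, show ((1 : ZMod 4)).val = 1 from rfl, w1, h])⟩
    · rintro ⟨g, rfl⟩
      simp only [Set.mem_insert_iff, Set.mem_singleton_iff]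
      cases g with
      | a i =>
        rw [hφa]
        have hlt : (i : ZMod 4).val < 4 := ZMod.val_lt _
        rcases (by omega : (i : ZMod 4).val = 0 ∨ (i : ZMod 4).val = 1 ∨
            (i : ZMod 4).val = 2 ∨ (i : ZMod 4).val = 3) with h'|h'|h'|h' <;> rw [h']
        · left; exact v0
        · right; right; left; exact v1
        · right; left; exact v2
        · right; right; right; left; exact v3
      | xa i =>
        rw [hφxa]
        have hlt : (i : ZMod 4).val < 4 := ZMod.val_lt _
        rcases (by omega : (i : ZMod 4).val = 0 ∨ (i : ZMod 4).val = 1 ∨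
            (i : ZMod 4).val = 2 ∨ (i : ZMod 4).val = 3) with h'|h'|h'|h' <;> rw [h']
        · right; right; right; right; left; exact w0
        · right; right; right; right; right; right; right; exact w1
        · right; right; right; right; right; left; exact w2
        · right; right; right; right; right; right; left; exact w3
  have e : (Subgroup.closure ({s, w} : Set SL2)) ≃* QuaternionGroup 2 :=
    (MulEquiv.subgroupCongr hrange).symm.trans (MonoidHom.ofInjective hinj).symm
  refine ⟨partA, partB, ?_, ⟨e⟩⟩
  rw [Nat.card_congr e.toEquiv, Nat.card_eq_fintype_card, QuaternionGroup.card]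
end

section
/- Let D = {diag(z, z⁻¹) : z ∈ ℂˣ} ⊆ SL(2,ℂ), let SO(2,ℂ) = {A ∈ O(2,ℂ) : det A = 1}, let w = [[0,1],[−1,0]], r = diag(1,−1), and δ = (w, r) ∈ SL(2,ℂ) × O(2,ℂ). Let Γ be the subgroup of SL(2,ℂ) × O(2,ℂ) generated by D × SO(2,ℂ) together with δ. Then: (a) δ² = (−I, I) and conjugation by δ inverts every element of D × SO(2,ℂ); (b) the centralizer of δ in Γ is exactly {(aI, bI) : a,b ∈ {1,−1}} ∪ {(aI, bI)·δ : a,b ∈ {1,−1}}, a group of order 8 isomorphic to (ℤ/4) × (ℤ/2). -/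
open Matrix

private abbrev M2' : Type := Matrix (Fin 2) (Fin 2) ℂ
private abbrev SL2' : Type := Matrix.SpecialLinearGroup (Fin 2) ℂ
private abbrev O2' : Type := Matrix.orthogonalGroup (Fin 2) ℂ
private abbrev G2' : Type := SL2' × O2'

private lemma tr2' (a b c d : ℂ) : (!![a,b;c,d])ᵀ = !![a,c;b,d] := by
  ext i j; fin_cases i <;> fin_cases j <;> simp

private lemma diag2' (a b : ℂ) : Matrix.diagonal ![a,b] = !![a,0;0,b] := by
  ext i j; fin_cases i <;> fin_cases j <;> simp [Matrix.diagonal]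

private lemma negone2' : (-1 : M2') = !![-1,0;0,-1] := by
  ext i j; fin_cases i <;> fin_cases j <;> simp [Matrix.one_apply]

private lemma so2_form' (s : O2') (hdet : ((s : M2')).det = 1) :
    ∃ a b : ℂ, (s : M2') = !![a, b; -b, a] ∧ a^2 + b^2 = 1 := by
  have horth : (s : M2') * (s : M2')ᵀ = 1 := s.2.2
  set M := (s : M2') with hM
  have hMe : M = !![M 0 0, M 0 1; M 1 0, M 1 1] := Matrix.etaExpand_eq M |>.symm
  set a := M 0 0; set b := M 0 1; set c := M 1 0; set d := M 1 1
  rw [hMe] at horth hdet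
  rw [Matrix.det_fin_two_of] at hdet
  rw [tr2', Matrix.mul_fin_two, Matrix.one_fin_two] at horth
  have h00 := congrFun (congrFun horth 0) 0
  have h01 := congrFun (congrFun horth 0) 1
  simp at h00 h01
  refine ⟨a, b, ?_, by linear_combination h00⟩
  rw [hMe]
  have hd : d = a := by linear_combination b*h01 + a*hdet - d*h00
  have hc : c = -b := by linear_combination a*h01 - c*h00 - b*hdet
  rw [hd, hc]

set_option maxHeartbeats 1000000 in
/-- Let `D ⊆ SL(2,ℂ)` be the diagonal torus `{diag(z,z⁻¹)}`, let
`SO(2,ℂ) ⊆ O(2,ℂ)` be the special orthogonal group, let `w = [[0,1],[−1,0]]`,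
`r = diag(1,−1)`, `δ = (w,r)`, and let `Γ ≤ SL(2,ℂ) × O(2,ℂ)` be generated by
`D × SO(2,ℂ)` and `δ`. Then (a) `δ² = (−I, I)` and conjugation by `δ` inverts every
element of `D × SO(2,ℂ)`; (b) the centralizer of `δ` in `Γ` is exactly
`{(±I, ±I)·δᵏ : k = 0,1}`, a group of order 8 isomorphic to `ℤ/4 × ℤ/2`. -/
theorem stmt_12 (w : Matrix.SpecialLinearGroup (Fin 2) ℂ)
    (hw : (w : Matrix (Fin 2) (Fin 2) ℂ) = !![0, 1; -1, 0])
    (r : Matrix.orthogonalGroup (Fin 2) ℂ)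
    (hr : (r : Matrix (Fin 2) (Fin 2) ℂ) = Matrix.diagonal ![1, -1]) :
    let Dset : Set (Matrix.SpecialLinearGroup (Fin 2) ℂ) :=
      {A | ∃ z : ℂ, z ≠ 0 ∧ (A : Matrix (Fin 2) (Fin 2) ℂ) = Matrix.diagonal ![z, z⁻¹]}
    let SO2set : Set (Matrix.orthogonalGroup (Fin 2) ℂ) :=
      {A | ((A : Matrix (Fin 2) (Fin 2) ℂ)).det = 1}
    let δ : Matrix.SpecialLinearGroup (Fin 2) ℂ × Matrix.orthogonalGroup (Fin 2) ℂ := (w, r)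
    let Γ : Subgroup (Matrix.SpecialLinearGroup (Fin 2) ℂ × Matrix.orthogonalGroup (Fin 2) ℂ) :=
      Subgroup.closure ((Dset ×ˢ SO2set) ∪ {δ})
    (((δ ^ 2).1 : Matrix (Fin 2) (Fin 2) ℂ) = -1 ∧
      ((δ ^ 2).2 : Matrix (Fin 2) (Fin 2) ℂ) = 1) ∧
    (∀ p ∈ Dset ×ˢ SO2set, δ * p * δ⁻¹ = p⁻¹) ∧
    ((Subgroup.centralizer {δ} ⊓ Γ : Subgroup
        (Matrix.SpecialLinearGroup (Fin 2) ℂ × Matrix.orthogonalGroup (Fin 2) ℂ)) : Set _) =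
      {g | ∃ (x : Matrix.SpecialLinearGroup (Fin 2) ℂ × Matrix.orthogonalGroup (Fin 2) ℂ)
            (k : ℕ), k < 2 ∧
          ((x.1 : Matrix (Fin 2) (Fin 2) ℂ) = 1 ∨ (x.1 : Matrix (Fin 2) (Fin 2) ℂ) = -1) ∧
          ((x.2 : Matrix (Fin 2) (Fin 2) ℂ) = 1 ∨ (x.2 : Matrix (Fin 2) (Fin 2) ℂ) = -1) ∧
          g = x * δ ^ k} ∧
    Nat.card (Subgroup.centralizer {δ} ⊓ Γ : Subgroup
        (Matrix.SpecialLinearGroup (Fin 2) ℂ × Matrix.orthogonalGroup (Fin 2) ℂ)) = 8 ∧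
    Nonempty ((Subgroup.centralizer {δ} ⊓ Γ : Subgroup
        (Matrix.SpecialLinearGroup (Fin 2) ℂ × Matrix.orthogonalGroup (Fin 2) ℂ)) ≃*
      (Multiplicative (ZMod 4) × Multiplicative (ZMod 2))) := by
  intro Dset SO2set δ Γ
  -- basic matrix facts
  have hrmat : (r : M2') = !![1,0;0,-1] := hr.trans (diag2' 1 (-1))
  have hwinv : ((w⁻¹ : SL2') : M2') = !![0,-1;1,0] := by
    rw [Matrix.SpecialLinearGroup.coe_inv, hw, Matrix.adjugate_fin_two_of]; norm_num
  have hrinv : ((r⁻¹ : O2') : M2') = !![1,0;0,-1] := by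
    show ((r : M2'))ᵀ = _
    rw [hrmat, tr2']
  have hW2 : (w : M2') * (w : M2') = -1 := by
    rw [hw, Matrix.mul_fin_two, negone2']; norm_num
  have hR2 : (r : M2') * (r : M2') = 1 := by
    rw [hrmat, Matrix.mul_fin_two, Matrix.one_fin_two]; norm_num
  have parta1 : (((δ ^ 2).1 : SL2') : M2') = -1 := by
    show ((w ^ 2 : SL2') : M2') = -1
    rw [pow_two]; exact hW2
  have parta2 : (((δ ^ 2).2 : O2') : M2') = 1 := by
    show ((r ^ 2 : O2') : M2') = 1
    rw [pow_two]; exact hR2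
  -- part (b)
  have hconj : ∀ p ∈ Dset ×ˢ SO2set, δ * p * δ⁻¹ = p⁻¹ := by
    rintro ⟨d, s⟩ ⟨⟨z, hz, hd⟩, hs⟩
    have hdinv : ((d⁻¹ : SL2') : M2') = !![z⁻¹,0;0,z] := by
      rw [Matrix.SpecialLinearGroup.coe_inv, hd, diag2', Matrix.adjugate_fin_two_of]; norm_num
    have h1 : w * d * w⁻¹ = d⁻¹ := by
      apply Subtype.ext
      show (w : M2') * (d : M2') * ((w⁻¹ : SL2') : M2') = ((d⁻¹ : SL2') : M2')
      rw [hwinv, hw, hd, hdinv, diag2', Matrix.mul_fin_two, Matrix.mul_fin_two]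
      norm_num
    obtain ⟨a, b, hsm, -⟩ := so2_form' s hs
    have hsinv : ((s⁻¹ : O2') : M2') = !![a,-b;b,a] := by
      show ((s : M2'))ᵀ = _
      rw [hsm, tr2']
    have h2 : r * s * r⁻¹ = s⁻¹ := by
      apply Subtype.ext
      show (r : M2') * (s : M2') * ((r⁻¹ : O2') : M2') = ((s⁻¹ : O2') : M2')
      rw [hrinv, hrmat, hsm, hsinv, Matrix.mul_fin_two, Matrix.mul_fin_two]
      norm_num
    show (w * d * w⁻¹, r * s * r⁻¹) = (d⁻¹, s⁻¹)
    rw [h1, h2]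
  -- H := Dset ×ˢ SO2set is a subgroup-set
  have honeH : (1 : G2') ∈ Dset ×ˢ SO2set := by
    constructor
    · refine ⟨1, one_ne_zero, ?_⟩
      rw [inv_one, diag2', ← Matrix.one_fin_two]
      rfl
    · show ((1 : O2') : M2').det = 1
      simp
  have hmulH : ∀ p q : G2', p ∈ Dset ×ˢ SO2set → q ∈ Dset ×ˢ SO2set →
      p * q ∈ Dset ×ˢ SO2set := by
    rintro ⟨d1,s1⟩ ⟨d2,s2⟩ ⟨⟨z1,hz1,hd1⟩,hs1⟩ ⟨⟨z2,hz2,hd2⟩,hs2⟩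
    constructor
    · refine ⟨z1*z2, mul_ne_zero hz1 hz2, ?_⟩
      show (d1 : M2') * (d2 : M2') = _
      rw [hd1, hd2, diag2', diag2', diag2', Matrix.mul_fin_two]
      norm_num [mul_inv]
      rw [mul_comm z1⁻¹ z2⁻¹]
    · show ((s1 : M2') * (s2 : M2')).det = 1
      rw [Matrix.det_mul]
      have h1 : ((s1 : M2')).det = 1 := hs1
      have h2 : ((s2 : M2')).det = 1 := hs2
      rw [h1, h2, mul_one]
  have hinvH : ∀ p : G2', p ∈ Dset ×ˢ SO2set → p⁻¹ ∈ Dset ×ˢ SO2set := by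
    rintro ⟨d,s⟩ ⟨⟨z,hz,hd⟩,hs⟩
    constructor
    · refine ⟨z⁻¹, inv_ne_zero hz, ?_⟩
      show ((d⁻¹ : SL2') : M2') = _
      rw [Matrix.SpecialLinearGroup.coe_inv, hd, diag2', Matrix.adjugate_fin_two_of, diag2',
        inv_inv]
      norm_num
    · show (((s : M2'))ᵀ).det = 1
      rw [Matrix.det_transpose]
      exact hs
  have hδ2mem : δ ^ 2 ∈ Dset ×ˢ SO2set := by
    constructor
    · refine ⟨-1, by norm_num, ?_⟩
      show (((δ ^ 2).1 : SL2') : M2') = _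
      rw [parta1, diag2', negone2']
      norm_num
    · show (((δ ^ 2).2 : O2') : M2').det = 1
      rw [parta2, Matrix.det_one]
  have hδΓ : δ ∈ Γ := Subgroup.subset_closure (Set.mem_union_right _ rfl)
  have hHΓ : ∀ p : G2', p ∈ Dset ×ˢ SO2set → p ∈ Γ := fun p hp =>
    Subgroup.subset_closure (Set.mem_union_left _ hp)
  have hswap : ∀ p : G2', p ∈ Dset ×ˢ SO2set → δ * p = p⁻¹ * δ := by
    intro p hp
    have h := hconj p hp
    calc δ * p = (δ * p * δ⁻¹) * δ := by group
    _ = p⁻¹ * δ := by rw [h]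
  -- the subgroup K = H ∪ Hδ
  have hKmul : ∀ g1 g2 : G2',
      (g1 ∈ Dset ×ˢ SO2set ∨ ∃ h ∈ Dset ×ˢ SO2set, g1 = h * δ) →
      (g2 ∈ Dset ×ˢ SO2set ∨ ∃ h ∈ Dset ×ˢ SO2set, g2 = h * δ) →
      (g1 * g2 ∈ Dset ×ˢ SO2set ∨ ∃ h ∈ Dset ×ˢ SO2set, g1 * g2 = h * δ) := by
    rintro g1 g2 (h1 | ⟨h, hh, rfl⟩) (h2 | ⟨h', hh', rfl⟩)
    · exact Or.inl (hmulH _ _ h1 h2)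
    · exact Or.inr ⟨g1 * h', hmulH _ _ h1 hh', (mul_assoc _ _ _).symm⟩
    · refine Or.inr ⟨h * g2⁻¹, hmulH _ _ hh (hinvH _ h2), ?_⟩
      rw [mul_assoc, hswap g2 h2, ← mul_assoc]
    · refine Or.inl ?_
      have he : h * δ * (h' * δ) = (h * h'⁻¹) * δ^2 := by
        calc h * δ * (h' * δ) = h * (δ * h' * δ) := by rw [mul_assoc, ← mul_assoc δ]
        _ = h * (h'⁻¹ * δ * δ) := by rw [hswap h' hh']
        _ = h * h'⁻¹ * δ ^ 2 := by rw [pow_two, mul_assoc h'⁻¹, ← mul_assoc]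
      rw [he]
      exact hmulH _ _ (hmulH _ _ hh (hinvH _ hh')) hδ2mem
  have hKinv : ∀ g : G2',
      (g ∈ Dset ×ˢ SO2set ∨ ∃ h ∈ Dset ×ˢ SO2set, g = h * δ) →
      (g⁻¹ ∈ Dset ×ˢ SO2set ∨ ∃ h ∈ Dset ×ˢ SO2set, g⁻¹ = h * δ) := by
    rintro g (h1 | ⟨h, hh, rfl⟩)
    · exact Or.inl (hinvH _ h1)
    · refine Or.inr ⟨h * (δ^2)⁻¹, hmulH _ _ hh (hinvH _ hδ2mem), ?_⟩
      have e1 : δ⁻¹ * h⁻¹ = h * δ⁻¹ := by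
        have h2 := hconj h hh
        calc δ⁻¹ * h⁻¹ = δ⁻¹ * (δ * h * δ⁻¹) := by rw [h2]
        _ = h * δ⁻¹ := by group
      calc (h * δ)⁻¹ = δ⁻¹ * h⁻¹ := mul_inv_rev _ _
      _ = h * δ⁻¹ := e1
      _ = h * (δ^2)⁻¹ * δ := by group
  have hΓK : ∀ g ∈ Γ, g ∈ Dset ×ˢ SO2set ∨ ∃ h ∈ Dset ×ˢ SO2set, g = h * δ := by
    have hle : Γ ≤
        { carrier := {g : G2' | g ∈ Dset ×ˢ SO2set ∨ ∃ h ∈ Dset ×ˢ SO2set, g = h * δ}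
          mul_mem' := fun {a b} ha hb => hKmul a b ha hb
          one_mem' := Or.inl honeH
          inv_mem' := fun {a} ha => hKinv a ha } := by
      apply Subgroup.closure_le _ |>.2
      rintro g (hg | hg)
      · exact Or.inl hg
      · rcases hg with rfl
        exact Or.inr ⟨1, honeH, (one_mul _).symm⟩
    exact fun g hg => hle hg
  -- elements of H commuting with δ are (±1, ±1)
  have hsq : ∀ p : G2', p ∈ Dset ×ˢ SO2set → δ * p = p * δ →
      ((p.1 : M2') = 1 ∨ (p.1 : M2') = -1) ∧ ((p.2 : M2') = 1 ∨ (p.2 : M2') = -1) := by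
    rintro ⟨d,s⟩ hp hcm
    have hsq1 : (d, s) * ((d : SL2'), s) = (1 : G2') := by
      have h2 := hconj _ hp
      have h3 : ((d, s) : G2') = ((d, s) : G2')⁻¹ := by
        calc ((d, s) : G2') = δ * (d, s) * δ⁻¹ := by rw [hcm]; group
        _ = _ := h2
      calc ((d,s) : G2') * (d,s) = (d,s) * ((d,s) : G2')⁻¹ := by rw [← h3]
      _ = 1 := by group
    obtain ⟨⟨z, hz, hd⟩, hs⟩ := hp
    obtain ⟨a, b, hsm, hab⟩ := so2_form' s hs
    have hdd : (d : M2') * d = 1 := by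
      have := congrArg Prod.fst hsq1
      exact Subtype.ext_iff.mp this
    have hss : (s : M2') * s = 1 := by
      have := congrArg Prod.snd hsq1
      exact Subtype.ext_iff.mp this
    constructor
    · rw [hd, diag2', Matrix.mul_fin_two, Matrix.one_fin_two] at hdd
      have h00 := congrFun (congrFun hdd 0) 0
      simp at h00
      rcases mul_self_eq_one_iff.mp h00 with h | h
      · left
        rw [hd, h, inv_one, diag2', ← Matrix.one_fin_two]
      · right
        rw [hd, h, diag2', negone2']
        norm_num
    · rw [hsm, Matrix.mul_fin_two, Matrix.one_fin_two] at hss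
      have h00 := congrFun (congrFun hss 0) 0
      have h01 := congrFun (congrFun hss 0) 1
      simp at h00 h01
      have hb2 : b^2 = 0 := by linear_combination (hab - h00) / 2
      have hb : b = 0 := by
        exact pow_eq_zero_iff (two_ne_zero) |>.mp hb2
      have ha2 : a * a = 1 := by linear_combination hab - hb2
      rcases mul_self_eq_one_iff.mp ha2 with h | h
      · left
        rw [hsm, hb, h, Matrix.one_fin_two]
        norm_num
      · right
        rw [hsm, hb, h, negone2']
        norm_num
  -- scalar pairs times δ^k lie in the centralizer ∩ Γ
  have hscalar_mem : ∀ x : G2', ((x.1 : M2') = 1 ∨ (x.1 : M2') = -1) →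
      ((x.2 : M2') = 1 ∨ (x.2 : M2') = -1) → ∀ k : ℕ,
      x * δ ^ k ∈ Subgroup.centralizer {δ} ⊓ Γ := by
    intro x h1 h2 k
    have hxH : x ∈ Dset ×ˢ SO2set := by
      constructor
      · rcases h1 with h | h
        · exact ⟨1, one_ne_zero, by rw [h, inv_one, diag2', ← Matrix.one_fin_two]⟩
        · refine ⟨-1, by norm_num, ?_⟩
          rw [h, diag2', negone2']
          norm_num
      · show ((x.2 : M2')).det = 1
        rcases h2 with h | h
        · rw [h, Matrix.det_one]
        · rw [h, negone2', Matrix.det_fin_two_of]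
          norm_num
    have hcx : δ * x = x * δ := by
      have hc1 : w * x.1 = x.1 * w := by
        apply Subtype.ext
        show (w : M2') * (x.1 : M2') = (x.1 : M2') * w
        rcases h1 with h | h <;> rw [h] <;> simp
      have hc2 : r * x.2 = x.2 * r := by
        apply Subtype.ext
        show (r : M2') * (x.2 : M2') = (x.2 : M2') * r
        rcases h2 with h | h <;> rw [h] <;> simp
      show (w * x.1, r * x.2) = (x.1 * w, x.2 * r)
      rw [hc1, hc2]
    refine Subgroup.mem_inf.mpr ⟨?_, ?_⟩
    · refine Subgroup.mem_centralizer_iff.mpr ?_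
      rintro m hm
      rcases hm with rfl
      calc δ * (x * δ ^ k) = (δ * x) * δ ^ k := by rw [← mul_assoc]
      _ = (x * δ) * δ ^ k := by rw [hcx]
      _ = x * (δ ^ k * δ) := by rw [mul_assoc, ← pow_succ', pow_succ]
      _ = (x * δ ^ k) * δ := by rw [← mul_assoc]
    · exact mul_mem (hHΓ x hxH) (pow_mem hδΓ k)
  -- part (c) : the set equality
  have partc : ((Subgroup.centralizer {δ} ⊓ Γ : Subgroup G2') : Set G2') =
      {g : G2' | ∃ (x : G2') (k : ℕ), k < 2 ∧
          ((x.1 : M2') = 1 ∨ (x.1 : M2') = -1) ∧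
          ((x.2 : M2') = 1 ∨ (x.2 : M2') = -1) ∧ g = x * δ ^ k} := by
    ext g
    simp only [SetLike.mem_coe, Subgroup.mem_inf, Set.mem_setOf_eq]
    constructor
    · rintro ⟨hc, hΓ⟩
      have hcomm : δ * g = g * δ := Subgroup.mem_centralizer_iff.mp hc δ rfl
      rcases hΓK g hΓ with hH | ⟨h, hh, rfl⟩
      · obtain ⟨h1, h2⟩ := hsq g hH hcomm
        exact ⟨g, 0, by norm_num, h1, h2, by rw [pow_zero, mul_one]⟩
      · have hcomm' : δ * h = h * δ := by
          apply mul_right_cancel (b := δ)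
          calc (δ * h) * δ = δ * (h * δ) := by rw [mul_assoc]
          _ = (h * δ) * δ := hcomm
        obtain ⟨h1, h2⟩ := hsq h hh hcomm'
        exact ⟨h, 1, one_lt_two, h1, h2, by rw [pow_one]⟩
    · rintro ⟨x, k, hk, h1, h2, rfl⟩
      exact Subgroup.mem_inf.mp (hscalar_mem x h1 h2 k)
  -- concrete elements
  have hn1det : ((-1 : M2')).det = 1 := by
    rw [negone2', Matrix.det_fin_two_of]; norm_num
  set C := Subgroup.centralizer {δ} ⊓ Γ with hCdef
  set n1 : SL2' := ⟨(-1 : M2'), hn1det⟩ with hn1def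
  have hm1mem : (-1 : M2') ∈ Matrix.orthogonalGroup (Fin 2) ℂ := by
    have ht : ((-1 : M2'))ᵀ * (-1 : M2') = 1 := by
      rw [Matrix.transpose_neg, Matrix.transpose_one, neg_mul_neg, one_mul]
    have ht' : (-1 : M2') * ((-1 : M2'))ᵀ = 1 := by
      rw [Matrix.transpose_neg, Matrix.transpose_one, neg_mul_neg, one_mul]
    exact ⟨ht, ht'⟩
  set m1 : O2' := ⟨(-1 : M2'), hm1mem⟩ with hm1def
  set ε : G2' := ((1 : SL2'), m1) with hεdef
  have hδC : δ ∈ C := by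
    refine Subgroup.mem_inf.mpr ⟨Subgroup.mem_centralizer_iff.mpr ?_, hδΓ⟩
    rintro m hm
    rcases hm with rfl
    rfl
  have hεC : ε ∈ C := by
    have h := hscalar_mem ε (Or.inl rfl) (Or.inr rfl) 0
    rwa [pow_zero, mul_one] at h
  -- group facts in G2'
  have hδ4G : δ ^ 4 = 1 := by
    have hw4 : w ^ 4 = 1 := by
      apply Subtype.ext
      show ((w : M2')) ^ 4 = 1
      rw [show (4:ℕ) = 2*2 from rfl, pow_mul,
        show ((w : M2')) ^ 2 = -1 from by rw [pow_two]; exact hW2, neg_one_sq]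
    have hr4 : r ^ 4 = 1 := by
      apply Subtype.ext
      show ((r : M2')) ^ 4 = 1
      rw [show (4:ℕ) = 2*2 from rfl, pow_mul,
        show ((r : M2')) ^ 2 = 1 from by rw [pow_two]; exact hR2, one_pow]
    have e1 : (δ ^ 4).1 = 1 := hw4
    have e2 : (δ ^ 4).2 = 1 := hr4
    exact Prod.ext e1 e2
  have hε2G : ε ^ 2 = 1 := by
    have e1 : (ε ^ 2).1 = 1 := by
      show (1 : SL2') ^ 2 = 1
      rw [one_pow]
    have e2 : (ε ^ 2).2 = 1 := by
      apply Subtype.ext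
      show ((-1 : M2')) ^ 2 = 1
      rw [neg_one_sq]
    exact Prod.ext e1 e2
  have hcomG : ε * δ = δ * ε := by
    have e1 : (ε * δ).1 = (δ * ε).1 := by
      show (1 : SL2') * w = w * 1
      rw [one_mul, mul_one]
    have e2 : (ε * δ).2 = (δ * ε).2 := by
      apply Subtype.ext
      show (-1 : M2') * (r : M2') = (r : M2') * (-1 : M2')
      rw [neg_one_mul, mul_neg_one]
    exact Prod.ext e1 e2
  have hce : Commute ε δ := hcomG
  have hδ2e : δ ^ 2 = ((n1 : SL2'), (1 : O2')) := by
    refine Prod.ext (Subtype.ext ?_) (Subtype.ext ?_)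
    · exact parta1
    · exact parta2
  have hprod : δ ^ 2 * ε = ((n1 : SL2'), m1) := by
    rw [hδ2e]
    show ((n1 * 1 : SL2'), (1 * m1 : O2')) = _
    rw [mul_one, one_mul]
  have hmove : ∀ a b : ℕ, (δ ^ a * ε) * δ ^ b = δ ^ (a + b) * ε := by
    intro a b
    rw [mul_assoc, (hce.pow_right b).eq, ← mul_assoc, ← pow_add]
  -- subgroup-level facts
  have hδ4 : (⟨δ, hδC⟩ : C) ^ 4 = 1 := by
    apply Subtype.ext
    show δ ^ 4 = 1
    exact hδ4G
  have hε2 : (⟨ε, hεC⟩ : C) ^ 2 = 1 := by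
    apply Subtype.ext
    show ε ^ 2 = 1
    exact hε2G
  have hcc : Commute (⟨δ, hδC⟩ : C) (⟨ε, hεC⟩ : C) := by
    apply Subtype.ext
    show δ * ε = ε * δ
    exact hcomG.symm
  -- the homomorphism
  let f : Multiplicative (ZMod 4) × Multiplicative (ZMod 2) →* C :=
  { toFun := fun p => (⟨δ, hδC⟩ : C) ^ (Multiplicative.toAdd p.1).val *
      (⟨ε, hεC⟩ : C) ^ (Multiplicative.toAdd p.2).val
    map_one' := by
      show (⟨δ, hδC⟩ : C) ^ (0 : ZMod 4).val * (⟨ε, hεC⟩ : C) ^ (0 : ZMod 2).val = 1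
      rw [ZMod.val_zero, ZMod.val_zero, pow_zero, pow_zero, mul_one]
    map_mul' := by
      rintro ⟨j1, k1⟩ ⟨j2, k2⟩
      show (⟨δ, hδC⟩ : C) ^ (Multiplicative.toAdd j1 + Multiplicative.toAdd j2).val *
          (⟨ε, hεC⟩ : C) ^ (Multiplicative.toAdd k1 + Multiplicative.toAdd k2).val = _
      rw [ZMod.val_add, ZMod.val_add, ← pow_eq_pow_mod _ hδ4, ← pow_eq_pow_mod _ hε2,
        pow_add, pow_add]
      exact (hcc.pow_pow _ _).mul_mul_mul_comm _ _ }
  have hval : ∀ p : Multiplicative (ZMod 4) × Multiplicative (ZMod 2),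
      ((f p : C) : G2') = δ ^ (Multiplicative.toAdd p.1).val * ε ^ (Multiplicative.toAdd p.2).val :=
    fun p => rfl
  -- injectivity
  have hwpow : ∀ n : ℕ, n < 4 → w ^ n = 1 → n = 0 := by
    intro n hn hwn
    have hm : (w : M2') ^ n = 1 := by
      have h := Subtype.ext_iff.mp hwn
      exact h
    interval_cases n
    · rfl
    · exfalso
      rw [pow_one, hw] at hm
      have h := congrFun (congrFun hm 0) 1
      simp [Matrix.one_apply] at h
    · exfalso
      rw [pow_two, hW2] at hm
      have h := congrFun (congrFun hm 0) 0
      rw [negone2', Matrix.one_fin_two] at h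
      simp at h
      norm_num at h
    · exfalso
      rw [pow_succ, pow_two, hW2, hw, neg_one_mul] at hm
      have h := congrFun (congrFun hm 0) 1
      rw [Matrix.one_fin_two] at h
      simp at h
  have hinj : Function.Injective f := by
    apply (injective_iff_map_eq_one f).mpr
    rintro ⟨j, k⟩ hjk
    have hv : δ ^ (Multiplicative.toAdd j).val * ε ^ (Multiplicative.toAdd k).val = 1 := by
      have h := Subtype.ext_iff.mp hjk
      exact h
    have h1 : w ^ (Multiplicative.toAdd j).val * (1 : SL2') ^ (Multiplicative.toAdd k).val = 1 :=
      congrArg Prod.fst hv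
    rw [one_pow, mul_one] at h1
    have hj0 : (Multiplicative.toAdd j).val = 0 := hwpow _ (ZMod.val_lt _) h1
    rw [hj0, pow_zero, one_mul] at hv
    have h2 : (1 : SL2') ^ (Multiplicative.toAdd k).val = 1 := congrArg Prod.fst hv
    have h2' : m1 ^ (Multiplicative.toAdd k).val = 1 := congrArg Prod.snd hv
    have hk0 : (Multiplicative.toAdd k).val = 0 := by
      have hlt := ZMod.val_lt (Multiplicative.toAdd k)
      rcases (by omega : (Multiplicative.toAdd k).val = 0 ∨ (Multiplicative.toAdd k).val = 1) with h | h
      · exact h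
      · exfalso
        rw [h, pow_one] at h2'
        have h3 : (-1 : M2') = 1 := Subtype.ext_iff.mp h2'
        rw [negone2', Matrix.one_fin_two] at h3
        have h4 := congrFun (congrFun h3 0) 0
        simp at h4
        norm_num at h4
    have hj1 : j = 1 := by
      have h5 : Multiplicative.toAdd j = 0 := (ZMod.val_eq_zero _).mp hj0
      rw [← ofAdd_toAdd j, h5, ofAdd_zero]
    have hk1 : k = 1 := by
      have h5 : Multiplicative.toAdd k = 0 := (ZMod.val_eq_zero _).mp hk0
      rw [← ofAdd_toAdd k, h5, ofAdd_zero]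
    rw [hj1, hk1]
    rfl
  -- surjectivity
  have hsurj : Function.Surjective f := by
    rintro ⟨g, hg⟩
    have hg' : g ∈ (C : Set G2') := hg
    rw [hCdef, partc] at hg'
    obtain ⟨x, k, hk, h1, h2, rfl⟩ := hg'
    obtain ⟨x1, x2⟩ := x
    have hx1 : x1 = 1 ∨ x1 = n1 := by
      rcases h1 with h | h
      · exact Or.inl (Subtype.ext h)
      · exact Or.inr (Subtype.ext h)
    have hx2 : x2 = 1 ∨ x2 = m1 := by
      rcases h2 with h | h
      · exact Or.inl (Subtype.ext h)
      · exact Or.inr (Subtype.ext h)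
    interval_cases k <;> rcases hx1 with rfl | rfl <;> rcases hx2 with rfl | rfl
    · refine ⟨(Multiplicative.ofAdd (0 : ZMod 4), Multiplicative.ofAdd (0 : ZMod 2)), ?_⟩
      apply Subtype.ext
      rw [hval]
      show δ ^ (0 : ZMod 4).val * ε ^ (0 : ZMod 2).val = ((1 : SL2'), (1 : O2')) * δ ^ 0
      rw [ZMod.val_zero, ZMod.val_zero, pow_zero, pow_zero, mul_one, mul_one]
      rfl
    · refine ⟨(Multiplicative.ofAdd (0 : ZMod 4), Multiplicative.ofAdd (1 : ZMod 2)), ?_⟩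
      apply Subtype.ext
      rw [hval]
      show δ ^ (0 : ZMod 4).val * ε ^ (1 : ZMod 2).val = ((1 : SL2'), m1) * δ ^ 0
      rw [ZMod.val_zero, show (1 : ZMod 2).val = 1 from rfl, pow_zero, pow_one, one_mul, mul_one]
    · refine ⟨(Multiplicative.ofAdd (2 : ZMod 4), Multiplicative.ofAdd (0 : ZMod 2)), ?_⟩
      apply Subtype.ext
      rw [hval]
      show δ ^ (2 : ZMod 4).val * ε ^ (0 : ZMod 2).val = ((n1 : SL2'), (1 : O2')) * δ ^ 0
      rw [show (2 : ZMod 4).val = 2 from rfl, ZMod.val_zero, pow_zero, pow_zero,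
        mul_one, mul_one, hδ2e]
    · refine ⟨(Multiplicative.ofAdd (2 : ZMod 4), Multiplicative.ofAdd (1 : ZMod 2)), ?_⟩
      apply Subtype.ext
      rw [hval]
      show δ ^ (2 : ZMod 4).val * ε ^ (1 : ZMod 2).val = ((n1 : SL2'), m1) * δ ^ 0
      rw [show (2 : ZMod 4).val = 2 from rfl, show (1 : ZMod 2).val = 1 from rfl,
        pow_one, pow_zero, mul_one, hprod]
    · refine ⟨(Multiplicative.ofAdd (1 : ZMod 4), Multiplicative.ofAdd (0 : ZMod 2)), ?_⟩
      apply Subtype.ext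
      rw [hval]
      show δ ^ (1 : ZMod 4).val * ε ^ (0 : ZMod 2).val = ((1 : SL2'), (1 : O2')) * δ ^ 1
      rw [show (1 : ZMod 4).val = 1 from rfl, ZMod.val_zero, pow_zero, mul_one, pow_one]
      show δ = (1 : G2') * δ
      rw [one_mul]
    · refine ⟨(Multiplicative.ofAdd (1 : ZMod 4), Multiplicative.ofAdd (1 : ZMod 2)), ?_⟩
      apply Subtype.ext
      rw [hval]
      show δ ^ (1 : ZMod 4).val * ε ^ (1 : ZMod 2).val = ((1 : SL2'), m1) * δ ^ 1
      rw [show (1 : ZMod 4).val = 1 from rfl, show (1 : ZMod 2).val = 1 from rfl,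
        pow_one, pow_one]
      show δ * ε = ε * δ
      exact hcomG.symm
    · refine ⟨(Multiplicative.ofAdd (3 : ZMod 4), Multiplicative.ofAdd (0 : ZMod 2)), ?_⟩
      apply Subtype.ext
      rw [hval]
      show δ ^ (3 : ZMod 4).val * ε ^ (0 : ZMod 2).val = ((n1 : SL2'), (1 : O2')) * δ ^ 1
      rw [show (3 : ZMod 4).val = 3 from rfl, ZMod.val_zero, pow_zero, mul_one, pow_one,
        ← hδ2e, ← pow_succ]
    · refine ⟨(Multiplicative.ofAdd (3 : ZMod 4), Multiplicative.ofAdd (1 : ZMod 2)), ?_⟩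
      apply Subtype.ext
      rw [hval]
      show δ ^ (3 : ZMod 4).val * ε ^ (1 : ZMod 2).val = ((n1 : SL2'), m1) * δ ^ 1
      rw [show (3 : ZMod 4).val = 3 from rfl, show (1 : ZMod 2).val = 1 from rfl,
        pow_one, pow_one, ← hprod, mul_assoc, hcomG, ← mul_assoc, ← pow_succ]
  -- conclusion
  have e : (Multiplicative (ZMod 4) × Multiplicative (ZMod 2)) ≃* C :=
    MulEquiv.ofBijective f ⟨hinj, hsurj⟩
  refine ⟨⟨parta1, parta2⟩, hconj, partc, ?_, ⟨e.symm⟩⟩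
  have hcard : Nat.card C = Nat.card (Multiplicative (ZMod 4) × Multiplicative (ZMod 2)) :=
    Nat.card_congr e.toEquiv.symm
  rw [hcard]
  simp [Nat.card_eq_fintype_card]
end
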